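/- arXiv:1609.06378 — 10 statements merged into one kernel-verified Lean document; each statement's English description precedes it below -/
import Mathlib

section
/- Let T ∈ Σ^n and let T# be T with the terminator # appended. For all positions 1 ≤ i < j ≤ n+1, the rotation of T# starting at i is lexicographically smaller than the rotation of T# starting at j if and only if the suffix (T#)[i..n+1] is lexicographically smaller than the suffix (T#)[j..n+1]. Consequently, the lexicographic order of the rotations of T# coincides with the lexicographic order of the suffixes of T#. -/
private lemma lex_append_iff {α : Type*} [LinearOrder α] :
    ∀ (a b : List α), ¬ a <+: b → ¬ b <+: a → ∀ x y : List α,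
      (List.Lex (· < ·) (a ++ x) (b ++ y) ↔ List.Lex (· < ·) a b)
  | [], b, ha, _, _, _ => absurd (List.nil_prefix) ha
  | _ :: _, [], _, hb, _, _ => absurd (List.nil_prefix) hb
  | a :: as, b :: bs, ha, hb, x, y => by
    rcases lt_trichotomy a b with h | h | h
    · simp only [List.cons_append]
      exact ⟨fun _ => List.Lex.rel h, fun _ => List.Lex.rel h⟩
    · subst h
      simp only [List.cons_append, List.lex_cons_iff]
      exact lex_append_iff as bs (fun hp => ha (List.cons_prefix_cons.2 ⟨rfl, hp⟩))
        (fun hp => hb (List.cons_prefix_cons.2 ⟨rfl, hp⟩)) x y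
    · constructor
      · intro hl
        cases hl with
        | cons h' => exact absurd rfl (ne_of_gt h)
        | rel h' => exact absurd h' (not_lt.2 h.le)
      · intro hl
        cases hl with
        | cons h' => exact absurd rfl (ne_of_gt h)
        | rel h' => exact absurd h' (not_lt.2 h.le)

/-- for a string `T` of length `n` over a linearly ordered alphabet and
a terminator `#` strictly smaller than every character of `T`, the lexicographic
comparison of the rotations of `T#` coincides with the lexicographic comparison of
the corresponding suffixes of `T#`. -/
theorem rotations_order_eq_suffixes_order {α : Type*} [LinearOrder α]
    (T : List α) (n : ℕ) (hn : T.length = n)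
    (hash : α) (hhash : ∀ c ∈ T, hash < c) :
    ∀ i j, 1 ≤ i → i < j → j ≤ n + 1 →
      (List.Lex (· < ·) ((T ++ [hash]).rotate (i - 1)) ((T ++ [hash]).rotate (j - 1)) ↔
        List.Lex (· < ·) ((T ++ [hash]).drop (i - 1)) ((T ++ [hash]).drop (j - 1))) := by
  intro i j h1 hij hj
  set S : List α := T ++ [hash] with hSdef
  have hS : S.length = n + 1 := by simp [hSdef, hn]
  have hi' : i - 1 ≤ S.length := by omega
  have hj' : j - 1 ≤ S.length := by omega
  have hij' : i - 1 < j - 1 := by omega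
  have hjn : j - 1 ≤ n := by omega
  rw [List.rotate_eq_drop_append_take hi', List.rotate_eq_drop_append_take hj']
  have hlenA : (S.drop (i - 1)).length = n + 1 - (i - 1) := by simp [hS]
  have hlenB : (S.drop (j - 1)).length = n + 1 - (j - 1) := by simp [hS]
  have hnpre1 : ¬ S.drop (i - 1) <+: S.drop (j - 1) := by
    intro hp
    have := hp.length_le
    rw [hlenA, hlenB] at this
    omega
  have hnpre2 : ¬ S.drop (j - 1) <+: S.drop (i - 1) := by
    intro hp
    have hk : n - (j - 1) < (S.drop (j - 1)).length := by omega
    have hk' : n - (j - 1) < (S.drop (i - 1)).length := by omega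
    have heq := hp.getElem hk
    rw [List.getElem_drop, List.getElem_drop] at heq
    have h1' : (j - 1) + (n - (j - 1)) = n := by omega
    have h2' : (i - 1) + (n - (j - 1)) < n := by omega
    have hB : S[(j - 1) + (n - (j - 1))]'(by omega) = hash := by
      simp only [hSdef]
      rw [List.getElem_append_right (by omega)]
      simp [hn, h1']
    have hApos : (i - 1) + (n - (j - 1)) < T.length := by omega
    have hA : S[(i - 1) + (n - (j - 1))]'(by omega) = T[(i - 1) + (n - (j - 1))]'hApos := by
      simp [hSdef, List.getElem_append_left hApos]
    rw [hB, hA] at heq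
    exact absurd heq.symm (ne_of_gt (hhash _ (List.getElem_mem hApos)))
  exact lex_append_iff _ _ hnpre1 hnpre2 _ _
end

section
/- Let T be a string of length n over an alphabet Σ and let W be a string over Σ. If there exist two distinct characters a ≠ b in Σ such that both aW and bW are right-maximal repeats of T, then W is a maximal repeat of T, i.e. W is both a left-maximal repeat and a right-maximal repeat of T. (Every strongly left-maximal repeat of T is a maximal repeat of T.) -/
/-- `W` is a right-maximal repeat of `T`. -/
def IsRightMaximalRepeat {α : Type*} (T W : List α) : Prop :=
  W.length < T.length ∧
    ∃ i j a b, i < T.length ∧ j < T.length ∧ i ≠ j ∧ a ≠ b ∧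
      (W ++ [a]) <+: T.rotate i ∧ (W ++ [b]) <+: T.rotate j

/-- `W` is a left-maximal repeat of `T`. -/
def IsLeftMaximalRepeat {α : Type*} (T W : List α) : Prop :=
  W.length < T.length ∧
    ∃ i j a b, i < T.length ∧ j < T.length ∧ i ≠ j ∧ a ≠ b ∧
      (a :: W) <+: T.rotate i ∧ (b :: W) <+: T.rotate j

/-- every strongly left-maximal repeat is a maximal repeat: if there
are two distinct characters `a ≠ b` such that `aW` and `bW` are both right-maximal
repeats of `T`, then `W` is both a left-maximal and a right-maximal repeat of `T`. -/
theorem stronglyLeftMaximal_isMaximalRepeat {α : Type*} (T : List α) (n : ℕ)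
    (hn : T.length = n) (W : List α) (a b : α) (hab : a ≠ b)
    (ha : IsRightMaximalRepeat T (a :: W)) (hb : IsRightMaximalRepeat T (b :: W)) :
    IsLeftMaximalRepeat T W ∧ IsRightMaximalRepeat T W := by
  obtain ⟨hla, i1, i2, c1, c2, hi1, hi2, hii, hc, hp1, hp2⟩ := ha
  obtain ⟨hlb, j1, j2, d1, d2, hj1, hj2, hjj, hd, hq1, hq2⟩ := hb
  have hn0 : 0 < T.length := lt_of_le_of_lt (Nat.zero_le _) hla
  have hW : W.length < T.length := by
    have : W.length + 1 < T.length := by simpa using hla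
    omega
  have shift : ∀ (k : ℕ) (x : α) (s : List α), (x :: s) <+: T.rotate k →
      s <+: T.rotate ((k + 1) % T.length) := by
    intro k x s hpre
    obtain ⟨t, ht⟩ := hpre
    have h1 : T.rotate (k + 1) = (s ++ t) ++ [x] := by
      rw [← List.rotate_rotate, ← ht]
      simp [List.rotate_cons_succ]
    rw [List.rotate_mod, h1]
    exact ⟨t ++ [x], by simp⟩
  constructor
  · refine ⟨hW, i1, j1, a, b, hi1, hj1, ?_, hab, ?_, ?_⟩
    · rintro rfl
      have h1 : (a :: W) <+: T.rotate i1 :=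
        ((a :: W).prefix_append [c1]).trans hp1
      have h2 : (b :: W) <+: T.rotate i1 :=
        ((b :: W).prefix_append [d1]).trans hq1
      rcases List.prefix_or_prefix_of_prefix h1 h2 with h | h
      · have := h.eq_of_length (by simp)
        exact hab (List.head_eq_of_cons_eq this)
      · have := h.eq_of_length (by simp)
        exact hab (List.head_eq_of_cons_eq this).symm
    · exact ((a :: W).prefix_append [c1]).trans hp1
    · exact ((b :: W).prefix_append [d1]).trans hq1
  · refine ⟨hW, (i1 + 1) % T.length, (i2 + 1) % T.length, c1, c2,
      Nat.mod_lt _ hn0, Nat.mod_lt _ hn0, ?_, hc, ?_, ?_⟩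
    · intro h
      apply hii
      have : i1 % T.length = i2 % T.length := Nat.ModEq.add_right_cancel' 1 h
      rwa [Nat.mod_eq_of_lt hi1, Nat.mod_eq_of_lt hi2] at this
    · exact shift i1 a (W ++ [c1]) (by simpa using hp1)
    · exact shift i2 a (W ++ [c2]) (by simpa using hp2)
end

section
/- Let T be a string of length n over an alphabet Σ and let W be a right-maximal repeat of T with |W| ≤ n−2. If there is a single character a such that, for every rotation of T having W as a prefix, the rotation starting one position earlier (cyclically) begins with a — i.e., every occurrence of W is cyclically preceded by the same character a — then aW is a right-maximal repeat of T. (Hence every right-maximal repeat of T of length at most n−2 that is not strongly left-maximal has a right-maximal left-extension; equivalently, every leaf of the suffix-link tree either has more than one Weiner link or its label has length n−1.) -/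
private lemma mod_succ_eq {n i : ℕ} (hn : 1 ≤ n) (hi : i < n) :
    ((i + n - 1) % n + 1) % n = i := by
  rw [Nat.mod_add_mod]
  have h1 : i + n - 1 + 1 = i + n := by omega
  rw [h1, Nat.add_mod_right, Nat.mod_eq_of_lt hi]

private lemma rotate_pred {α : Type*} (T : List α) (n : ℕ) (hn : T.length = n)
    (hn1 : 1 ≤ n) (i : ℕ) (hi : i < n) (a : α)
    (hhead : (T.rotate ((i + n - 1) % n)).head? = some a) :
    ∃ t, T.rotate ((i + n - 1) % n) = a :: t ∧ T.rotate i = t ++ [a] := by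
  set i' := (i + n - 1) % n with hi'
  obtain ⟨t, ht⟩ : ∃ t, T.rotate i' = a :: t := by
    cases h : T.rotate i' with
    | nil => rw [h] at hhead; simp at hhead
    | cons x xs =>
      rw [h] at hhead; simp at hhead
      exact ⟨xs, by rw [hhead]⟩
  refine ⟨t, ht, ?_⟩
  have h1 : (T.rotate i').rotate 1 = T.rotate (i' + 1) := by
    rw [List.rotate_rotate]
  have h2 : T.rotate (i' + 1) = T.rotate ((i' + 1) % T.length) := by
    rw [List.rotate_mod]
  have h3 : (i' + 1) % T.length = i := by
    rw [hn]; exact mod_succ_eq hn1 hi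
  rw [ht] at h1
  rw [List.rotate_cons_succ, List.rotate_zero] at h1
  rw [h1, h2, h3]

/-- let `W` be a right-maximal repeat of `T` with `|W| ≤ n − 2`.  If
there is a single character `a` such that, for every rotation of `T` having `W` as a
prefix, the rotation starting one position earlier (cyclically) begins with `a`,
then `aW` is a right-maximal repeat of `T`. -/
theorem rightMaximal_unique_left_extension {α : Type*} (T : List α) (n : ℕ)
    (hn : T.length = n) (W : List α)
    (hW : IsRightMaximalRepeat T W) (hlen : W.length ≤ n - 2) (a : α)
    (ha : ∀ i, i < n → W <+: T.rotate i →
      (T.rotate ((i + n - 1) % n)).head? = some a) :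
    IsRightMaximalRepeat T (a :: W) := by
  obtain ⟨hWlen, i, j, a', b, hi, hj, hij, hab, hpi, hpj⟩ := hW
  rw [hn] at hi hj hWlen
  have hn2 : 2 ≤ n := by omega
  have hn1 : 1 ≤ n := by omega
  -- the rotations preceding i and j
  have hWi : W <+: T.rotate i := (List.prefix_append W [a']).trans hpi
  have hWj : W <+: T.rotate j := (List.prefix_append W [b]).trans hpj
  obtain ⟨ti, hti, hti'⟩ := rotate_pred T n hn hn1 i hi a (ha i hi hWi)
  obtain ⟨tj, htj, htj'⟩ := rotate_pred T n hn hn1 j hj a (ha j hj hWj)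
  have hlti : ti.length = n - 1 := by
    have := List.length_rotate T ((i + n - 1) % n)
    rw [hti, hn] at this; simp at this; omega
  have hltj : tj.length = n - 1 := by
    have := List.length_rotate T ((j + n - 1) % n)
    rw [htj, hn] at this; simp at this; omega
  -- W ++ [a'] is a prefix of ti
  have hpi2 : (W ++ [a']) <+: ti := by
    apply List.prefix_of_prefix_length_le (by rw [← hti']; exact hpi)
      (ti.prefix_append [a])
    simp; omega
  have hpj2 : (W ++ [b]) <+: tj := by
    apply List.prefix_of_prefix_length_le (by rw [← htj']; exact hpj)
      (tj.prefix_append [a])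
    simp; omega
  refine ⟨by simp; omega, (i + n - 1) % n, (j + n - 1) % n, a', b, ?_, ?_, ?_, hab, ?_, ?_⟩
  · rw [hn]; exact Nat.mod_lt _ (by omega)
  · rw [hn]; exact Nat.mod_lt _ (by omega)
  · intro h
    apply hij
    have := mod_succ_eq hn1 hi
    have := mod_succ_eq hn1 hj
    rw [h] at *; omega
  · rw [hti]
    obtain ⟨s, hs⟩ := hpi2
    exact ⟨s, by simp [← hs]⟩
  · rw [htj]
    obtain ⟨s, hs⟩ := hpj2
    exact ⟨s, by simp [← hs]⟩
end

section
/- Let T be a string of length n ≥ 2 over an alphabet Σ whose n rotations are pairwise distinct. Then: (1) the number of distinct nonempty right-maximal repeats of T is at most n−2 (this is the number of suffix links of the suffix tree of T); (2) the number of pairs (W, a) with a ∈ Σ such that both W and aW are right-maximal repeats of T (explicit Weiner links) is at most n−2; (3) the number of pairs (W, a) with a ∈ Σ such that W is a right-maximal repeat of T, aW is a prefix of at least one rotation of T, and aW is not a right-maximal repeat of T (implicit Weiner links) is at most 3n−3. -/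
namespace WeinerAux

/-- Dropping a prefix of a circular factor yields a circular factor at a shifted rotation. -/
lemma drop_prefix_rotate {α : Type*} (T : List α) {x : List α} {r m : ℕ}
    (hx : x <+: T.rotate r) (hm : m ≤ x.length) :
    x.drop m <+: T.rotate (r + m) := by
  obtain ⟨s, hs⟩ := hx
  have hm2 : m ≤ (T.rotate r).length := by
    rw [← hs, List.length_append]; omega
  have h1 : x.drop m <+: (T.rotate r).rotate m := by
    rw [List.rotate_eq_drop_append_take hm2, ← hs, List.drop_append_of_le_length hm]
    exact ((x.drop m).prefix_append s).trans ((x.drop m ++ s).prefix_append _)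
  rwa [List.rotate_rotate] at h1

/-- Suffixes of right-maximal repeats are right-maximal repeats. -/
lemma rmr_drop {α : Type*} {T W : List α} (h : IsRightMaximalRepeat T W)
    {m : ℕ} (hm : m ≤ W.length) : IsRightMaximalRepeat T (W.drop m) := by
  obtain ⟨hlen, i, j, a, b, hi, hj, hij, hab, hpa, hpb⟩ := h
  have hn0 : 0 < T.length := by omega
  have hshift : ∀ (k : ℕ) (c : α), (W ++ [c]) <+: T.rotate k →
      (W.drop m ++ [c]) <+: T.rotate ((k + m) % T.length) := by
    intro k c hk
    have h1 := drop_prefix_rotate T hk (le_trans hm (by simp))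
    rw [List.drop_append_of_le_length hm] at h1
    rwa [← List.rotate_mod] at h1
  refine ⟨by rw [List.length_drop]; omega, (i + m) % T.length, (j + m) % T.length, a, b,
    Nat.mod_lt _ hn0, Nat.mod_lt _ hn0, ?_, hab, hshift i a hpa, hshift j b hpb⟩
  intro hmod
  have h0 : Nat.ModEq T.length (i + m) (j + m) := hmod
  have h1 : Nat.ModEq T.length i j := Nat.ModEq.add_right_cancel' m h0
  have h2 : i % T.length = j % T.length := h1
  rw [Nat.mod_eq_of_lt hi, Nat.mod_eq_of_lt hj] at h2
  exact hij h2

/-- The empty word is a right-maximal repeat when rotations are pairwise distinct. -/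
lemma rmr_nil {α : Type*} (T : List α) (h2 : 2 ≤ T.length)
    (hdistinct : ∀ i j, i < T.length → j < T.length → T.rotate i = T.rotate j → i = j) :
    IsRightMaximalRepeat T ([] : List α) := by
  have hn0 : 0 < T.length := by omega
  have hne : T ≠ [] := List.length_pos_iff.mp hn0
  by_cases hrep : ∀ b ∈ T, b = T.head hne
  · have hT : T = List.replicate T.length (T.head hne) :=
      List.eq_replicate_iff.mpr ⟨rfl, hrep⟩
    have h01 := hdistinct 0 1 hn0 (by omega)
      (by rw [hT, List.rotate_replicate, List.rotate_replicate])
    omega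
  · push_neg at hrep
    obtain ⟨b, hbmem, hbne⟩ := hrep
    obtain ⟨k, hk, hTk⟩ := List.mem_iff_getElem.mp hbmem
    have hk0 : k ≠ 0 := by
      intro h0
      apply hbne
      subst h0
      rw [← hTk]
      exact List.getElem_zero hn0
    have hkrot : [b] <+: T.rotate k := by
      rw [List.rotate_eq_drop_append_take hk.le, List.drop_eq_getElem_cons hk, hTk]
      exact ⟨_, rfl⟩
    have h0rot : [T.head hne] <+: T.rotate 0 := by
      rw [List.rotate_zero]
      exact ⟨T.tail, by rw [List.singleton_append, List.cons_head_tail]⟩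
    exact ⟨hn0, k, 0, b, T.head hne, hk, hn0, hk0, hbne, hkrot, h0rot⟩

open Classical in
/-- Minimal occurrence position of `W` among rotations. -/
noncomputable def wMp {α : Type*} (T W : List α) : ℕ :=
  if h : ∃ p, p < T.length ∧ W <+: T.rotate p then Nat.find h else 0

/-- The character following `W` at rotation `p` (as an option). -/
def wNc {α : Type*} (T W : List α) (p : ℕ) : Option α :=
  ((T.rotate p).drop W.length).head?

open Classical in
/-- Minimal occurrence of `W` whose following character differs from the one at `wMp`. -/
noncomputable def wG {α : Type*} (T W : List α) : ℕ :=
  if h : ∃ q, (q < T.length ∧ W <+: T.rotate q) ∧ wNc T W q ≠ wNc T W (wMp T W)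
  then Nat.find h else 0

open Classical in
/-- Position just past the minimal occurrence of `a::W`. -/
noncomputable def wPsi {α : Type*} (T : List α) (pr : List α × α) : ℕ :=
  if h : ∃ i, i < T.length ∧ (pr.2 :: pr.1) <+: T.rotate i
  then (Nat.find h + (pr.1.length + 1)) % T.length else 0

lemma wNc_eq {α : Type*} (T : List α) {W t : List α} {c : α} {p : ℕ}
    (h : (W ++ c :: t) <+: T.rotate p) : wNc T W p = some c := by
  obtain ⟨s, hs⟩ := h
  unfold wNc
  rw [← hs, List.append_assoc, List.drop_left]
  rfl

open Classical in
lemma wMp_spec {α : Type*} (T W : List α) (h : ∃ p, p < T.length ∧ W <+: T.rotate p) :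
    (wMp T W < T.length ∧ W <+: T.rotate (wMp T W)) ∧
      ∀ p, p < T.length → W <+: T.rotate p → wMp T W ≤ p := by
  have e : wMp T W = Nat.find h := by unfold wMp; rw [dif_pos h]
  rw [e]
  exact ⟨Nat.find_spec h, fun p hp hpre => Nat.find_min' h ⟨hp, hpre⟩⟩

open Classical in
lemma wG_spec {α : Type*} (T W : List α)
    (h : ∃ q, (q < T.length ∧ W <+: T.rotate q) ∧ wNc T W q ≠ wNc T W (wMp T W)) :
    ((wG T W < T.length ∧ W <+: T.rotate (wG T W)) ∧
        wNc T W (wG T W) ≠ wNc T W (wMp T W)) ∧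
      ∀ q, q < wG T W →
        ¬((q < T.length ∧ W <+: T.rotate q) ∧ wNc T W q ≠ wNc T W (wMp T W)) := by
  have e : wG T W = Nat.find h := by unfold wG; rw [dif_pos h]
  rw [e]
  exact ⟨Nat.find_spec h, fun q hq => Nat.find_min h hq⟩

open Classical in
lemma wPsi_spec {α : Type*} (T : List α) (pr : List α × α)
    (h : ∃ i, i < T.length ∧ (pr.2 :: pr.1) <+: T.rotate i) :
    ∃ q, (q < T.length ∧ (pr.2 :: pr.1) <+: T.rotate q) ∧
      wPsi T pr = (q + (pr.1.length + 1)) % T.length := by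
  refine ⟨Nat.find h, Nat.find_spec h, ?_⟩
  unfold wPsi
  rw [dif_pos h]

/-- Part 1 core: the set of all right-maximal repeats has at most `n - 1` elements. -/
theorem nodes_bound {α : Type*} (T : List α) :
    {W : List α | IsRightMaximalRepeat T W}.Finite ∧
      {W : List α | IsRightMaximalRepeat T W}.ncard ≤ T.length - 1 := by
  classical
  have hDex : ∀ W : List α, IsRightMaximalRepeat T W →
      ∃ q, (q < T.length ∧ W <+: T.rotate q) ∧ wNc T W q ≠ wNc T W (wMp T W) := by
    intro W hW
    obtain ⟨hlen, i, j, a, b, hi, hj, hij, hab, hpa, hpb⟩ := hW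
    have hna : wNc T W i = some a := wNc_eq T hpa
    have hnb : wNc T W j = some b := wNc_eq T hpb
    by_cases hca : wNc T W (wMp T W) = some a
    · refine ⟨j, ⟨hj, (W.prefix_append [b]).trans hpb⟩, ?_⟩
      rw [hnb, hca]
      simp only [ne_eq, Option.some.injEq]
      exact fun h => hab h.symm
    · exact ⟨i, ⟨hi, (W.prefix_append [a]).trans hpa⟩, fun h => hca (h.symm.trans hna)⟩
  -- asymmetric key lemma
  have key : ∀ W : List α, IsRightMaximalRepeat T W → ∀ W' : List α,
      IsRightMaximalRepeat T W' → wG T W = wG T W' → W.length < W'.length → False := by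
    intro W hW W' hW' hEq hlen
    obtain ⟨⟨⟨hqn, hqpre⟩, hqne⟩, hqmin⟩ := wG_spec T W (hDex W hW)
    obtain ⟨⟨⟨hqn', hqpre'⟩, hqne'⟩, hqmin'⟩ := wG_spec T W' (hDex W' hW')
    rw [← hEq] at hqn' hqpre' hqne' hqmin'
    have hWW' : W <+: W' := List.prefix_of_prefix_length_le hqpre hqpre' hlen.le
    obtain ⟨u, rfl⟩ := hWW'
    cases u with
    | nil => simp at hlen
    | cons c t =>
      have hc0 : wNc T W (wG T W) = some c := wNc_eq T hqpre'
      have hnolt : ∀ p, p < T.length → (W ++ c :: t) <+: T.rotate p → ¬ p < wG T W := by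
        intro p hp hpre hplt
        have h1 : wNc T W p = some c := wNc_eq T hpre
        have h2 := hqmin p hplt
        push_neg at h2
        have h3 : wNc T W p = wNc T W (wMp T W) :=
          h2 ⟨hp, (W.prefix_append (c :: t)).trans hpre⟩
        exact hqne (hc0.trans (h1.symm.trans h3))
      obtain ⟨⟨hmn, hmpre⟩, hmmin⟩ := wMp_spec T (W ++ c :: t) ⟨_, hqn, hqpre'⟩
      have hmp_eq : wMp T (W ++ c :: t) = wG T W := by
        have h1 : wMp T (W ++ c :: t) ≤ wG T W := hmmin _ hqn hqpre'
        have h2 : ¬ wMp T (W ++ c :: t) < wG T W := hnolt _ hmn hmpre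
        omega
      exact hqne' (by rw [hmp_eq])
  have hinj : Set.InjOn (wG T) {W : List α | IsRightMaximalRepeat T W} := by
    intro W hW W' hW' hEq
    have hW : IsRightMaximalRepeat T W := hW
    have hW' : IsRightMaximalRepeat T W' := hW'
    rcases lt_trichotomy W.length W'.length with h | h | h
    · exact (key W hW W' hW' hEq h).elim
    · obtain ⟨⟨⟨_, hqpre⟩, _⟩, _⟩ := wG_spec T W (hDex W hW)
      obtain ⟨⟨⟨_, hqpre'⟩, _⟩, _⟩ := wG_spec T W' (hDex W' hW')
      rw [← hEq] at hqpre'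
      exact List.IsPrefix.eq_of_length (List.prefix_of_prefix_length_le hqpre hqpre' h.le) h
    · exact (key W' hW' W hW hEq.symm h).elim
  have himg : ∀ W : List α, IsRightMaximalRepeat T W →
      wG T W ∈ Finset.Ioo 0 T.length := by
    intro W hW
    obtain ⟨⟨⟨hqn, hqpre⟩, hqne⟩, _⟩ := wG_spec T W (hDex W hW)
    obtain ⟨⟨hmn, hmpre⟩, hmmin⟩ := wMp_spec T W
      ⟨wG T W, hqn, hqpre⟩
    have hle : wMp T W ≤ wG T W := hmmin _ hqn hqpre
    have hne : wMp T W ≠ wG T W := fun h => hqne (by rw [h])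
    rw [Finset.mem_Ioo]
    omega
  have himg' : wG T '' {W : List α | IsRightMaximalRepeat T W} ⊆
      ↑(Finset.Ioo 0 T.length) := by
    rintro _ ⟨W, hW, rfl⟩
    exact himg W hW
  have hfin : {W : List α | IsRightMaximalRepeat T W}.Finite :=
    Set.Finite.of_finite_image
      (Set.Finite.subset (Finset.Ioo 0 T.length).finite_toSet himg') hinj
  refine ⟨hfin, ?_⟩
  calc {W : List α | IsRightMaximalRepeat T W}.ncard
      = (wG T '' {W : List α | IsRightMaximalRepeat T W}).ncard :=
        (Set.ncard_image_of_injOn hinj).symm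
    _ ≤ (↑(Finset.Ioo 0 T.length) : Set ℕ).ncard :=
        Set.ncard_le_ncard himg' (Finset.Ioo 0 T.length).finite_toSet
    _ = T.length - 1 := by rw [Set.ncard_coe_finset, Nat.card_Ioo]; omega

/-- Part 3 core: implicit Weiner links inject into positions. -/
theorem implicit_bound {α : Type*} (T : List α) :
    {p : List α × α | IsRightMaximalRepeat T p.1 ∧
        (∃ i, i < T.length ∧ (p.2 :: p.1) <+: T.rotate i) ∧
        ¬ IsRightMaximalRepeat T (p.2 :: p.1)}.Finite ∧
      {p : List α × α | IsRightMaximalRepeat T p.1 ∧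
        (∃ i, i < T.length ∧ (p.2 :: p.1) <+: T.rotate i) ∧
        ¬ IsRightMaximalRepeat T (p.2 :: p.1)}.ncard ≤ T.length := by
  classical
  have key : ∀ W : List α, ∀ a : α, ∀ W' : List α, ∀ a' : α,
      IsRightMaximalRepeat T W → (∃ i, i < T.length ∧ (a :: W) <+: T.rotate i) →
      ¬ IsRightMaximalRepeat T (a :: W) →
      IsRightMaximalRepeat T W' → (∃ i, i < T.length ∧ (a' :: W') <+: T.rotate i) →
      ¬ IsRightMaximalRepeat T (a' :: W') →
      wPsi T (W, a) = wPsi T (W', a') → W.length ≤ W'.length →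
      (W, a) = (W', a') := by
    intro W a W' a' hrm hex hnrm hrm' hex' hnrm' hpsi hlen
    obtain ⟨q, ⟨hq, hqpre⟩, hval⟩ := wPsi_spec T (W, a) hex
    obtain ⟨q', ⟨hq', hqpre'⟩, hval'⟩ := wPsi_spec T (W', a') hex'
    dsimp only at hqpre hqpre' hval hval'
    rw [hval, hval'] at hpsi
    obtain ⟨d, hdsum⟩ : ∃ d, W'.length + 1 = d + (W.length + 1) :=
      ⟨W'.length - W.length, by omega⟩
    have hmod : Nat.ModEq T.length (q + (W.length + 1)) ((q' + d) + (W.length + 1)) := by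
      have h1 : q' + (W'.length + 1) = (q' + d) + (W.length + 1) := by omega
      rw [h1] at hpsi
      exact hpsi
    have hmod2 : Nat.ModEq T.length q (q' + d) := Nat.ModEq.add_right_cancel' _ hmod
    have hmod3 : q % T.length = (q' + d) % T.length := hmod2
    have hqeq : (q' + d) % T.length = q := by rw [← hmod3, Nat.mod_eq_of_lt hq]
    have hdle : d ≤ (a' :: W').length := by simp only [List.length_cons]; omega
    have hs2 : (a' :: W').drop d <+: T.rotate ((q' + d) % T.length) := by
      have h1 := drop_prefix_rotate T hqpre' hdle
      rwa [← List.rotate_mod] at h1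
    rw [hqeq] at hs2
    have hlen2 : ((a' :: W').drop d).length = (a :: W).length := by
      simp only [List.length_drop, List.length_cons]; omega
    have heq2 : (a' :: W').drop d = a :: W :=
      List.IsPrefix.eq_of_length
        (List.prefix_of_prefix_length_le hs2 hqpre hlen2.le) hlen2
    cases d with
    | zero =>
      rw [List.drop_zero] at heq2
      simp only [List.cons.injEq] at heq2
      rw [heq2.1, heq2.2]
    | succ e =>
      rw [List.drop_succ_cons] at heq2
      have he : e ≤ W'.length := by omega
      exact absurd (heq2 ▸ rmr_drop hrm' he) hnrm
  have hinj : Set.InjOn (wPsi T) {p : List α × α | IsRightMaximalRepeat T p.1 ∧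
      (∃ i, i < T.length ∧ (p.2 :: p.1) <+: T.rotate i) ∧
      ¬ IsRightMaximalRepeat T (p.2 :: p.1)} := by
    rintro ⟨W, a⟩ hp ⟨W', a'⟩ hp' h
    obtain ⟨hrm, hex, hnrm⟩ := hp
    obtain ⟨hrm', hex', hnrm'⟩ := hp'
    rcases le_total W.length W'.length with hle | hle
    · exact key W a W' a' hrm hex hnrm hrm' hex' hnrm' h hle
    · exact (key W' a' W a hrm' hex' hnrm' hrm hex hnrm h.symm hle).symm
  have himg : wPsi T '' {p : List α × α | IsRightMaximalRepeat T p.1 ∧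
      (∃ i, i < T.length ∧ (p.2 :: p.1) <+: T.rotate i) ∧
      ¬ IsRightMaximalRepeat T (p.2 :: p.1)} ⊆ ↑(Finset.range T.length) := by
    rintro _ ⟨p, hp, rfl⟩
    obtain ⟨-, hex, -⟩ := hp
    obtain ⟨q, ⟨hq, -⟩, hval⟩ := wPsi_spec T p hex
    rw [Finset.coe_range, Set.mem_Iio, hval]
    exact Nat.mod_lt _ (lt_of_le_of_lt (Nat.zero_le q) hq)
  have hfin : {p : List α × α | IsRightMaximalRepeat T p.1 ∧
      (∃ i, i < T.length ∧ (p.2 :: p.1) <+: T.rotate i) ∧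
      ¬ IsRightMaximalRepeat T (p.2 :: p.1)}.Finite :=
    Set.Finite.of_finite_image
      (Set.Finite.subset (Finset.range T.length).finite_toSet himg) hinj
  refine ⟨hfin, ?_⟩
  calc {p : List α × α | IsRightMaximalRepeat T p.1 ∧
        (∃ i, i < T.length ∧ (p.2 :: p.1) <+: T.rotate i) ∧
        ¬ IsRightMaximalRepeat T (p.2 :: p.1)}.ncard
      = (wPsi T '' {p : List α × α | IsRightMaximalRepeat T p.1 ∧
        (∃ i, i < T.length ∧ (p.2 :: p.1) <+: T.rotate i) ∧
        ¬ IsRightMaximalRepeat T (p.2 :: p.1)}).ncard :=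
        (Set.ncard_image_of_injOn hinj).symm
    _ ≤ (↑(Finset.range T.length) : Set ℕ).ncard :=
        Set.ncard_le_ncard himg (Finset.range T.length).finite_toSet
    _ = T.length := by rw [Set.ncard_coe_finset, Finset.card_range]

end WeinerAux

/-- if the `n ≥ 2` rotations of `T` are pairwise distinct, then:
(1) `T` has at most `n − 2` distinct nonempty right-maximal repeats (suffix links);
(2) there are at most `n − 2` pairs `(W, a)` such that both `W` and `aW` are
right-maximal repeats of `T` (explicit Weiner links);
(3) there are at most `3n − 3` pairs `(W, a)` such that `W` is a right-maximal
repeat, `aW` is a prefix of at least one rotation of `T`, and `aW` is not a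
right-maximal repeat of `T` (implicit Weiner links). -/
theorem weiner_link_counts {α : Type*} (T : List α) (n : ℕ)
    (hn : T.length = n) (h2 : 2 ≤ n)
    (hdistinct : ∀ i j, i < n → j < n → T.rotate i = T.rotate j → i = j) :
    ({W : List α | W ≠ [] ∧ IsRightMaximalRepeat T W}.Finite ∧
      {W : List α | W ≠ [] ∧ IsRightMaximalRepeat T W}.ncard ≤ n - 2) ∧
    ({p : List α × α | IsRightMaximalRepeat T p.1 ∧
        IsRightMaximalRepeat T (p.2 :: p.1)}.Finite ∧
      {p : List α × α | IsRightMaximalRepeat T p.1 ∧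
        IsRightMaximalRepeat T (p.2 :: p.1)}.ncard ≤ n - 2) ∧
    ({p : List α × α | IsRightMaximalRepeat T p.1 ∧
        (∃ i, i < n ∧ (p.2 :: p.1) <+: T.rotate i) ∧
        ¬ IsRightMaximalRepeat T (p.2 :: p.1)}.Finite ∧
      {p : List α × α | IsRightMaximalRepeat T p.1 ∧
        (∃ i, i < n ∧ (p.2 :: p.1) <+: T.rotate i) ∧
        ¬ IsRightMaximalRepeat T (p.2 :: p.1)}.ncard ≤ 3 * n - 3) := by
  classical
  subst hn
  obtain ⟨hNfin, hNcard⟩ := WeinerAux.nodes_bound T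
  have heps : ([] : List α) ∈ {W : List α | IsRightMaximalRepeat T W} :=
    WeinerAux.rmr_nil T h2 hdistinct
  have hS1eq : {W : List α | W ≠ [] ∧ IsRightMaximalRepeat T W} =
      {W : List α | IsRightMaximalRepeat T W} \ {[]} := by
    ext W
    simp [Set.mem_diff, and_comm]
  have hS1fin : {W : List α | W ≠ [] ∧ IsRightMaximalRepeat T W}.Finite := by
    rw [hS1eq]
    exact hNfin.diff
  have hS1card : {W : List α | W ≠ [] ∧ IsRightMaximalRepeat T W}.ncard ≤ T.length - 2 := by
    rw [hS1eq, Set.ncard_diff_singleton_of_mem heps]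
    omega
  refine ⟨⟨hS1fin, hS1card⟩, ⟨?_, ?_⟩, ?_⟩
  · -- finiteness of explicit links
    apply Set.Finite.of_finite_image (f := fun p : List α × α => p.2 :: p.1)
    · apply Set.Finite.subset hS1fin
      rintro _ ⟨⟨W, a⟩, ⟨h1, h2'⟩, rfl⟩
      exact ⟨by simp, h2'⟩
    · rintro ⟨W, a⟩ _ ⟨W', a'⟩ _ h
      simp only [List.cons.injEq] at h
      exact Prod.ext h.2 h.1
  · -- cardinality of explicit links
    have hinj : Set.InjOn (fun p : List α × α => p.2 :: p.1)
        {p : List α × α | IsRightMaximalRepeat T p.1 ∧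
          IsRightMaximalRepeat T (p.2 :: p.1)} := by
      rintro ⟨W, a⟩ _ ⟨W', a'⟩ _ h
      simp only [List.cons.injEq] at h
      exact Prod.ext h.2 h.1
    have hsub : (fun p : List α × α => p.2 :: p.1) ''
        {p : List α × α | IsRightMaximalRepeat T p.1 ∧
          IsRightMaximalRepeat T (p.2 :: p.1)} ⊆
        {W : List α | W ≠ [] ∧ IsRightMaximalRepeat T W} := by
      rintro _ ⟨⟨W, a⟩, ⟨h1, h2'⟩, rfl⟩
      exact ⟨by simp, h2'⟩
    calc {p : List α × α | IsRightMaximalRepeat T p.1 ∧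
          IsRightMaximalRepeat T (p.2 :: p.1)}.ncard
        = ((fun p : List α × α => p.2 :: p.1) ''
          {p : List α × α | IsRightMaximalRepeat T p.1 ∧
            IsRightMaximalRepeat T (p.2 :: p.1)}).ncard :=
          (Set.ncard_image_of_injOn hinj).symm
      _ ≤ {W : List α | W ≠ [] ∧ IsRightMaximalRepeat T W}.ncard :=
          Set.ncard_le_ncard hsub hS1fin
      _ ≤ T.length - 2 := hS1card
  · obtain ⟨h3f, h3c⟩ := WeinerAux.implicit_bound T
    exact ⟨h3f, le_trans h3c (by omega)⟩
end

section
/- Let T be a string of length n whose n rotations are pairwise lexicographically distinct, let L = BWT_T, and define LF(i) = C[L[i]] + rank_{L[i]}(L, i) for i ∈ [1..n]. Then for every i ∈ [1..n], SA_T[LF(i)] = SA_T[i] − 1 (mod₁ n); in particular, LF is a permutation of [1..n]. -/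
private lemma lex_append_iff_aux {α : Type*} [LinearOrder α] :
    ∀ (u v s t : List α), u.length = v.length →
    (List.Lex (· < ·) (u ++ s) (v ++ t) ↔
      List.Lex (· < ·) u v ∨ (u = v ∧ List.Lex (· < ·) s t)) := by
  intro u
  induction u with
  | nil =>
    intro v s t h
    obtain rfl : v = [] := (List.length_eq_zero_iff.mp h.symm)
    simp
  | cons a u ih =>
    intro v s t h
    cases v with
    | nil => simp at h
    | cons b v =>
      simp only [List.cons_append]
      have hlen : u.length = v.length := by simpa using h
      rcases lt_trichotomy a b with hab | rfl | hba
      · constructor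
        · intro _; exact Or.inl (List.Lex.rel hab)
        · intro _; exact List.Lex.rel hab
      · simp only [List.cons_lex_cons_iff, lt_irrefl, false_or, List.cons.injEq, true_and, ih v s t hlen]
      · constructor
        · intro hcon
          cases hcon with
          | cons h' => exact absurd hba (lt_irrefl _)
          | rel h' => exact absurd h' (asymm hba)
        · rintro (hcon | ⟨heq, _⟩)
          · cases hcon with
            | cons h' => exact absurd hba (lt_irrefl _)
            | rel h' => exact absurd h' (asymm hba)
          · cases heq; exact absurd hba (lt_irrefl _)

private lemma countP_eq_card_fin {α : Type*} (T : List α) (p : α → Prop) [DecidablePred p] :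
    T.countP (fun x => decide (p x)) =
      (Finset.univ.filter (fun i : Fin T.length => p (T.get i))).card := by
  conv_lhs => rw [← List.map_get_finRange T]
  rw [List.countP_map, List.countP_eq_length_filter, Fin.univ_def]
  simp [Finset.filter, Finset.card, Multiset.filter_coe, Function.comp_def, List.get_eq_getElem]

/-- correctness of the LF mapping.  `T` is a string of length `n` whose
`n` rotations are pairwise (lexicographically) distinct, `sa` is its suffix array
(1-based: `sa i` is the starting position, in `[1..n]`, of the rotation of
lexicographic rank `i`), `L = BWT_T` with `L i = T[sa i − 1 (mod₁ n)]`, `C c` counts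
the positions of `T` holding a character strictly smaller than `c`, `rank c i`
counts the occurrences of `c` in `L[1..i]`, and `LF i = C (L i) + rank (L i) i`.
Then `sa (LF i) = sa i − 1 (mod₁ n)` for every `i ∈ [1..n]`; in particular `LF` is a
permutation of `[1..n]`. -/
theorem lf_mapping_correct {α : Type*} [LinearOrder α]
    (T : List α) (n : ℕ) (hn : T.length = n) (hpos : 1 ≤ n)
    (hdistinct : ∀ i j, i < n → j < n → T.rotate i = T.rotate j → i = j)
    (sa : ℕ → ℕ)
    (hsa_range : ∀ i, 1 ≤ i → i ≤ n → 1 ≤ sa i ∧ sa i ≤ n)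
    (hsa_mono : ∀ i j, 1 ≤ i → i < j → j ≤ n →
      List.Lex (· < ·) (T.rotate (sa i - 1)) (T.rotate (sa j - 1)))
    (hsa_surj : ∀ v, 1 ≤ v → v ≤ n → ∃ i, 1 ≤ i ∧ i ≤ n ∧ sa i = v)
    (mod1 : ℕ → ℕ) (hmod1 : ∀ x, mod1 x = if x % n = 0 then n else x % n)
    (L : ℕ → α)
    (hL : ∀ i, 1 ≤ i → i ≤ n → T[mod1 (sa i - 1) - 1]? = some (L i))
    (C : α → ℕ) (hC : ∀ c, C c = T.countP (fun x => decide (x < c)))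
    (rank : α → ℕ → ℕ)
    (hrank : ∀ c i, rank c i = ((Finset.Icc 1 i).filter (fun j => L j = c)).card)
    (LF : ℕ → ℕ) (hLF : ∀ i, LF i = C (L i) + rank (L i) i) :
    (∀ i, 1 ≤ i → i ≤ n → 1 ≤ LF i ∧ LF i ≤ n ∧ sa (LF i) = mod1 (sa i - 1)) ∧
      Set.BijOn LF (Set.Icc 1 n) (Set.Icc 1 n) := by
  classical
  set S : ℕ → ℕ := fun j => mod1 (sa j - 1) with hSdef
  -- irreflexivity of Lex
  have hirr : ∀ x : List α, ¬ List.Lex (· < ·) x x := fun x h =>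
    (Std.Asymm.asymm (r := List.Lex (· < ·)) x x h) h
  have hasym : ∀ {x y : List α}, List.Lex (· < ·) x y → List.Lex (· < ·) y x → False :=
    fun h h' => (Std.Asymm.asymm _ _ h) h'
  -- mod1 range
  have hmod1_range : ∀ x, 1 ≤ mod1 x ∧ mod1 x ≤ n := by
    intro x
    rw [hmod1]
    split
    · exact ⟨hpos, le_rfl⟩
    · have := Nat.mod_lt x (show 0 < n by omega)
      omega
  have hS_range : ∀ j, 1 ≤ S j ∧ S j ≤ n := fun j => hmod1_range _
  have hSlt : ∀ j, S j - 1 < n := fun j => by have := hS_range j; omega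
  -- sa injective
  have hsa_inj : ∀ a b, 1 ≤ a → a ≤ n → 1 ≤ b → b ≤ n → sa a = sa b → a = b := by
    intro a b ha1 ha2 hb1 hb2 heq
    by_contra hne
    rcases lt_or_gt_of_ne hne with h | h
    · have := hsa_mono a b ha1 h hb2
      rw [heq] at this
      exact hirr _ this
    · have := hsa_mono b a hb1 h ha2
      rw [heq] at this
      exact hirr _ this
  -- lex order iff on ranks
  have hlex_iff : ∀ a b, 1 ≤ a → a ≤ n → 1 ≤ b → b ≤ n →
      (List.Lex (· < ·) (T.rotate (sa a - 1)) (T.rotate (sa b - 1)) ↔ a < b) := by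
    intro a b ha1 ha2 hb1 hb2
    constructor
    · intro h
      by_contra hle
      push_neg at hle
      rcases eq_or_lt_of_le hle with rfl | hlt
      · exact hirr _ h
      · exact hasym h (hsa_mono b a hb1 hlt ha2)
    · intro h
      exact hsa_mono a b ha1 h hb2
  -- sa j in terms of S j
  have hS_inv : ∀ j, 1 ≤ j → j ≤ n → sa j = S j % n + 1 := by
    intro j h1 h2
    obtain ⟨hs1, hs2⟩ := hsa_range j h1 h2
    show sa j = mod1 (sa j - 1) % n + 1
    rw [hmod1]
    by_cases h : sa j = 1
    · rw [h]
      simp [Nat.mod_self]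
    · have hlt : sa j - 1 < n := by omega
      rw [Nat.mod_eq_of_lt hlt, if_neg (show ¬ (sa j - 1 = 0) by omega),
        Nat.mod_eq_of_lt hlt]
      omega
  have hS_inj : ∀ a b, 1 ≤ a → a ≤ n → 1 ≤ b → b ≤ n → S a = S b → a = b := by
    intro a b ha1 ha2 hb1 hb2 h
    exact hsa_inj a b ha1 ha2 hb1 hb2 (by rw [hS_inv a ha1 ha2, hS_inv b hb1 hb2, h])
  -- S surjective
  have hS_surj : ∀ v, 1 ≤ v → v ≤ n → ∃ j, 1 ≤ j ∧ j ≤ n ∧ S j = v := by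
    intro v hv1 hv2
    have hmod : v % n < n := Nat.mod_lt v (show 0 < n by omega)
    obtain ⟨j, h1, h2, h3⟩ := hsa_surj (v % n + 1) (by omega) (by omega)
    refine ⟨j, h1, h2, ?_⟩
    show mod1 (sa j - 1) = v
    rw [h3, hmod1]
    have e1 : v % n + 1 - 1 = v % n := by omega
    rw [e1, Nat.mod_mod_of_dvd v (dvd_refl n)]
    rcases eq_or_lt_of_le hv2 with rfl | hlt
    · simp [Nat.mod_self]
    · rw [Nat.mod_eq_of_lt hlt, if_neg (by omega)]
  -- rho : rank of previous rotation
  have hρex : ∀ j, ∃ k, 1 ≤ k ∧ k ≤ n ∧ sa k = S j :=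
    fun j => hsa_surj (S j) (hS_range j).1 (hS_range j).2
  set ρ : ℕ → ℕ := fun j => (hρex j).choose with hρdef
  have hρ : ∀ j, 1 ≤ ρ j ∧ ρ j ≤ n ∧ sa (ρ j) = S j := fun j => (hρex j).choose_spec
  have hρ_inj : ∀ a b, 1 ≤ a → a ≤ n → 1 ≤ b → b ≤ n → ρ a = ρ b → a = b := by
    intro a b ha1 ha2 hb1 hb2 h
    have : S a = S b := by rw [← (hρ a).2.2, ← (hρ b).2.2, h]
    exact hS_inj a b ha1 ha2 hb1 hb2 this
  have hρ_surj : ∀ k, 1 ≤ k → k ≤ n → ∃ j, 1 ≤ j ∧ j ≤ n ∧ ρ j = k := by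
    intro k hk1 hk2
    obtain ⟨j, hj1, hj2, hj3⟩ :=
      hS_surj (sa k) (hsa_range k hk1 hk2).1 (hsa_range k hk1 hk2).2
    refine ⟨j, hj1, hj2, ?_⟩
    exact hsa_inj _ _ (hρ j).1 (hρ j).2.1 hk1 hk2 (by rw [(hρ j).2.2, hj3])
  -- value of L
  have hLval : ∀ j, 1 ≤ j → j ≤ n → ∀ (h : S j - 1 < T.length), T[S j - 1] = L j := by
    intro j h1 h2 h
    have hh := hL j h1 h2
    rw [List.getElem?_eq_getElem h] at hh
    exact Option.some.inj hh
  -- rotate relation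
  have hrotS : ∀ j, 1 ≤ j → j ≤ n → (T.rotate (S j - 1)).rotate 1 = T.rotate (sa j - 1) := by
    intro j h1 h2
    obtain ⟨hs1, hs2⟩ := hsa_range j h1 h2
    rw [List.rotate_rotate]
    by_cases hcase : sa j = 1
    · have hSj : S j = n := by
        show mod1 (sa j - 1) = n
        rw [hmod1, hcase]
        simp
      rw [hSj, hcase]
      have h1n : n - 1 + 1 = n := by omega
      rw [h1n, ← hn, List.rotate_length]
      simp
    · have hlt : sa j - 1 < n := by omega
      have hSj : S j = sa j - 1 := by
        show mod1 (sa j - 1) = sa j - 1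
        rw [hmod1, Nat.mod_eq_of_lt hlt, if_neg (by omega)]
      rw [hSj]
      congr 1
      omega
  -- decomposition
  have hdecomp : ∀ j, 1 ≤ j → j ≤ n → ∃ W : List α, W.length = n - 1 ∧
      T.rotate (S j - 1) = L j :: W ∧ T.rotate (sa j - 1) = W ++ [L j] := by
    intro j h1 h2
    have hlen : (T.rotate (S j - 1)).length = n := by rw [List.length_rotate, hn]
    obtain ⟨c, W, hcW⟩ : ∃ c W, T.rotate (S j - 1) = c :: W := by
      cases hE : T.rotate (S j - 1) with
      | nil => rw [hE] at hlen; simp at hlen; omega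
      | cons c W => exact ⟨c, W, rfl⟩
    have hc : c = L j := by
      have hh := List.head?_rotate (l := T) (n := S j - 1) (by rw [hn]; exact hSlt j)
      rw [hcW] at hh
      have hLj : T[S j - 1]? = some (L j) := hL j h1 h2
      rw [hLj] at hh
      simpa using hh
    subst hc
    refine ⟨W, ?_, hcW, ?_⟩
    · have := hlen
      rw [hcW] at this
      simp at this
      omega
    · rw [← hrotS j h1 h2, hcW]
      have := List.rotate_cons_succ W (L j) 0
      simpa using this
  -- key comparison
  have hcmp : ∀ i j, 1 ≤ i → i ≤ n → 1 ≤ j → j ≤ n →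
      ((List.Lex (· < ·) (T.rotate (S j - 1)) (T.rotate (S i - 1)) ∨
        T.rotate (S j - 1) = T.rotate (S i - 1))
        ↔ (L j < L i ∨ (L j = L i ∧ j ≤ i))) := by
    intro i j hi1 hi2 hj1 hj2
    obtain ⟨Wj, hWjlen, hPj, hRj⟩ := hdecomp j hj1 hj2
    obtain ⟨Wi, hWilen, hPi, hRi⟩ := hdecomp i hi1 hi2
    have hWW : Wj.length = Wi.length := by rw [hWjlen, hWilen]
    have h1 : List.Lex (· < ·) (L j :: Wj) (L i :: Wi) ↔
        L j < L i ∨ (L j = L i ∧ List.Lex (· < ·) Wj Wi) := by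
      have := lex_append_iff_aux [L j] [L i] Wj Wi rfl
      simpa using this
    constructor
    · rintro (hlex | heq)
      · rw [hPj, hPi] at hlex
        rcases h1.mp hlex with hlt | ⟨hEq, hW⟩
        · exact Or.inl hlt
        · refine Or.inr ⟨hEq, ?_⟩
          have hA : List.Lex (· < ·) (Wj ++ [L j]) (Wi ++ [L i]) :=
            (lex_append_iff_aux Wj Wi [L j] [L i] hWW).mpr (Or.inl hW)
          rw [← hRj, ← hRi] at hA
          exact le_of_lt ((hlex_iff j i hj1 hj2 hi1 hi2).mp hA)
      · have hsame : S j - 1 = S i - 1 := hdistinct _ _ (hSlt j) (hSlt i) heq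
        have hsame2 : S j = S i := by
          have := hS_range j; have := hS_range i; omega
        have hji : j = i := hS_inj j i hj1 hj2 hi1 hi2 hsame2
        exact Or.inr ⟨by rw [hji], le_of_eq hji⟩
    · rintro (hlt | ⟨hEq, hle⟩)
      · left
        rw [hPj, hPi]
        exact h1.mpr (Or.inl hlt)
      · rcases eq_or_lt_of_le hle with rfl | hlt2
        · exact Or.inr rfl
        · left
          rw [hPj, hPi]
          apply h1.mpr
          right
          refine ⟨hEq, ?_⟩
          have hR := hsa_mono j i hj1 hlt2 hi2
          rw [hRj, hRi] at hR
          rcases (lex_append_iff_aux Wj Wi [L j] [L i] hWW).mp hR with h | ⟨_, h⟩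
          · exact h
          · rw [hEq] at h
            exact absurd h (hirr _)
  -- the key counting argument
  have key : ∀ i, 1 ≤ i → i ≤ n → LF i = ρ i := by
    intro i hi1 hi2
    set A : Finset ℕ := (Finset.Icc 1 n).filter
      (fun j => List.Lex (· < ·) (T.rotate (S j - 1)) (T.rotate (S i - 1)) ∨
        T.rotate (S j - 1) = T.rotate (S i - 1)) with hAdef
    -- A.card = ρ i
    have hcard1 : A.card = ρ i := by
      have hA2 : A = (Finset.Icc 1 n).filter (fun j => ρ j ≤ ρ i) := by
        rw [hAdef]
        apply Finset.filter_congr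
        intro j hj
        rw [Finset.mem_Icc] at hj
        have hSj : S j - 1 = sa (ρ j) - 1 := by rw [(hρ j).2.2]
        have hSi : S i - 1 = sa (ρ i) - 1 := by rw [(hρ i).2.2]
        rw [hSj, hSi]
        constructor
        · rintro (hlex | heq)
          · exact le_of_lt ((hlex_iff _ _ (hρ j).1 (hρ j).2.1 (hρ i).1 (hρ i).2.1).mp hlex)
          · have hs1 := hsa_range _ (hρ j).1 (hρ j).2.1
            have hs2 := hsa_range _ (hρ i).1 (hρ i).2.1
            have := hdistinct _ _ (show sa (ρ j) - 1 < n by omega)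
              (show sa (ρ i) - 1 < n by omega) heq
            have : sa (ρ j) = sa (ρ i) := by omega
            exact le_of_eq (hsa_inj _ _ (hρ j).1 (hρ j).2.1 (hρ i).1 (hρ i).2.1 this)
        · intro hle
          rcases eq_or_lt_of_le hle with heq | hlt
          · right; rw [heq]
          · left; exact (hlex_iff _ _ (hρ j).1 (hρ j).2.1 (hρ i).1 (hρ i).2.1).mpr hlt
      rw [hA2]
      have hbij : ((Finset.Icc 1 n).filter (fun j => ρ j ≤ ρ i)).card =
          (Finset.Icc 1 (ρ i)).card := by
        apply Finset.card_bij (fun j _ => ρ j)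
        · intro a ha
          rw [Finset.mem_filter, Finset.mem_Icc] at ha
          rw [Finset.mem_Icc]
          exact ⟨(hρ a).1, ha.2⟩
        · intro a ha b hb hab
          rw [Finset.mem_filter, Finset.mem_Icc] at ha hb
          exact hρ_inj a b ha.1.1 ha.1.2 hb.1.1 hb.1.2 hab
        · intro k hk
          rw [Finset.mem_Icc] at hk
          obtain ⟨j, hj1, hj2, hj3⟩ := hρ_surj k hk.1 (le_trans hk.2 (hρ i).2.1)
          refine ⟨j, ?_, hj3⟩
          rw [Finset.mem_filter, Finset.mem_Icc]
          exact ⟨⟨hj1, hj2⟩, by rw [hj3]; exact hk.2⟩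
      rw [hbij, Nat.card_Icc]
      omega
    -- A.card = LF i
    have hcard2 : A.card = LF i := by
      have hA3 : A = (Finset.Icc 1 n).filter
          (fun j => L j < L i ∨ (L j = L i ∧ j ≤ i)) := by
        rw [hAdef]
        apply Finset.filter_congr
        intro j hj
        rw [Finset.mem_Icc] at hj
        exact hcmp i j hi1 hi2 hj.1 hj.2
      have hdisj : Disjoint ((Finset.Icc 1 n).filter (fun j => L j < L i))
          ((Finset.Icc 1 n).filter (fun j => L j = L i ∧ j ≤ i)) := by
        rw [Finset.disjoint_filter]
        rintro j _ hlt ⟨heq, _⟩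
        rw [heq] at hlt
        exact lt_irrefl _ hlt
      rw [hA3, Finset.filter_or, Finset.card_union_of_disjoint hdisj, hLF]
      · congr 1
        · -- card = C (L i)
          rw [hC, countP_eq_card_fin T (fun x => x < L i)]
          apply Finset.card_bij (fun j hj => (⟨S j - 1, by rw [hn]; exact hSlt j⟩ : Fin T.length))
          · intro a ha
            rw [Finset.mem_filter, Finset.mem_Icc] at ha
            rw [Finset.mem_filter]
            refine ⟨Finset.mem_univ _, ?_⟩
            show T.get _ < L i
            rw [List.get_eq_getElem]
            rw [hLval a ha.1.1 ha.1.2]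
            exact ha.2
          · intro a ha b hb hab
            rw [Finset.mem_filter, Finset.mem_Icc] at ha hb
            have : S a - 1 = S b - 1 := by
              simpa using congrArg Fin.val hab
            have hSab : S a = S b := by
              have := hS_range a; have := hS_range b; omega
            exact hS_inj a b ha.1.1 ha.1.2 hb.1.1 hb.1.2 hSab
          · intro k hk
            rw [Finset.mem_filter] at hk
            have hkval : (k : ℕ) < n := by rw [← hn]; exact k.isLt
            obtain ⟨j, hj1, hj2, hj3⟩ := hS_surj ((k : ℕ) + 1) (by omega) (by omega)
            have hSj1 : S j - 1 = (k : ℕ) := by omega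
            refine ⟨j, ?_, ?_⟩
            · rw [Finset.mem_filter, Finset.mem_Icc]
              refine ⟨⟨hj1, hj2⟩, ?_⟩
              have hLj : T[S j - 1]? = some (L j) := hL j hj1 hj2
              rw [hSj1] at hLj
              have hsome : T[(k : ℕ)]? = some (T.get k) := by
                rw [List.getElem?_eq_getElem k.isLt, List.get_eq_getElem]
              rw [hsome] at hLj
              rw [(Option.some.inj hLj).symm]
              exact hk.2
            · apply Fin.ext
              simpa using hSj1
        · -- card = rank (L i) i
          rw [hrank]
          congr 1
          ext j
          rw [Finset.mem_filter, Finset.mem_filter, Finset.mem_Icc, Finset.mem_Icc]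
          constructor
          · rintro ⟨⟨h1, _⟩, hLj, hji⟩
            exact ⟨⟨h1, hji⟩, hLj⟩
          · rintro ⟨⟨h1, hji⟩, hLj⟩
            exact ⟨⟨h1, le_trans hji hi2⟩, hLj, hji⟩
    omega
  -- conclude
  have main : ∀ i, 1 ≤ i → i ≤ n → 1 ≤ LF i ∧ LF i ≤ n ∧ sa (LF i) = mod1 (sa i - 1) := by
    intro i hi1 hi2
    have hk := key i hi1 hi2
    refine ⟨by rw [hk]; exact (hρ i).1, by rw [hk]; exact (hρ i).2.1, ?_⟩
    rw [hk, (hρ i).2.2]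
  refine ⟨main, ?_, ?_, ?_⟩
  · intro i hi
    rw [Set.mem_Icc] at hi ⊢
    exact ⟨(main i hi.1 hi.2).1, (main i hi.1 hi.2).2.1⟩
  · intro a ha b hb hab
    rw [Set.mem_Icc] at ha hb
    rw [key a ha.1 ha.2, key b hb.1 hb.2] at hab
    exact hρ_inj a b ha.1 ha.2 hb.1 hb.2 hab
  · intro v hv
    rw [Set.mem_Icc] at hv
    obtain ⟨j, hj1, hj2, hj3⟩ := hρ_surj v hv.1 hv.2
    refine ⟨j, Set.mem_Icc.mpr ⟨hj1, hj2⟩, ?_⟩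
    rw [key j hj1 hj2, hj3]
end

section
/- Let T be a string of length n whose n rotations are pairwise lexicographically distinct, let L = BWT_T, and for a string V let I(V) = { i ∈ [1..n] : V is a prefix of the rotation of T of lexicographic rank i }. Suppose V is a string with |V| ≤ n−1 and I(V) is nonempty, say I(V) = [i₁..j₁] (it is an interval of consecutive ranks). Then for every character c, I(cV) = [ C[c] + rank_c(L, i₁−1) + 1 .. C[c] + rank_c(L, j₁) ] (this interval being empty when its left endpoint exceeds its right endpoint). In particular, cV is a prefix of some rotation of T if and only if rank_c(L, j₁) > rank_c(L, i₁−1). (Correctness of one step of backward search.) -/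
theorem lex_cc {α : Type*} [LinearOrder α] {a b : α} {l₁ l₂ : List α} :
    List.Lex (· < ·) (a :: l₁) (b :: l₂) ↔ a < b ∨ (a = b ∧ List.Lex (· < ·) l₁ l₂) := by
  constructor
  · intro h
    cases h with
    | cons h => exact Or.inr ⟨rfl, h⟩
    | rel h => exact Or.inl h
  · rintro (h | ⟨rfl, h⟩)
    · exact List.Lex.rel h
    · exact List.Lex.cons h

theorem lex_concat {α : Type*} [LinearOrder α] (c : α) :
    ∀ (A B : List α), A.length = B.length →
      (List.Lex (· < ·) (A ++ [c]) (B ++ [c]) ↔ List.Lex (· < ·) A B)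
  | [], [], _ => by simp
  | [], b :: B, h => by simp at h
  | a :: A, [], h => by simp at h
  | a :: A, b :: B, h => by
    simp only [List.cons_append, lex_cc, List.length_cons, Nat.add_right_cancel_iff] at *
    rw [lex_concat c A B h]

theorem bws_prefix_dropLast {α : Type*} {V X : List α} (h : V <+: X)
    (hl : V.length ≤ X.length - 1) : V <+: X.dropLast := by
  rw [List.prefix_iff_eq_take] at h ⊢
  rw [List.dropLast_eq_take, List.take_take, min_eq_left hl]
  exact h

theorem bws_countP_eq_sum {α : Type*} (f : α → Bool) :
    ∀ (l : List α), l.countP f = ∑ q ∈ Finset.range l.length, if (l[q]?.any f) = true then 1 else 0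
  | [] => by simp
  | a :: t => by
    rw [List.countP_cons, List.length_cons, Finset.sum_range_succ']
    simp only [List.getElem?_cons_succ, List.getElem?_cons_zero, Option.any_some]
    rw [bws_countP_eq_sum f t]

/-- correctness of one step of backward search.  With the suffix array
`sa`, the BWT `L`, the array `C` and the rank function as in the context, if
`I(V) = [i₁..j₁]` is the (nonempty) interval of ranks of the rotations prefixed by a
string `V` with `|V| ≤ n − 1`, then for every character `c` the interval of `cV` is
`[C c + rank c (i₁−1) + 1 .. C c + rank c j₁]`; in particular `cV` is a prefix of
some rotation of `T` iff `rank c j₁ > rank c (i₁−1)`. -/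
theorem backward_search_step {α : Type*} [LinearOrder α]
    (T : List α) (n : ℕ) (hn : T.length = n) (hpos : 1 ≤ n)
    (hdistinct : ∀ i j, i < n → j < n → T.rotate i = T.rotate j → i = j)
    (sa : ℕ → ℕ)
    (hsa_range : ∀ i, 1 ≤ i → i ≤ n → 1 ≤ sa i ∧ sa i ≤ n)
    (hsa_mono : ∀ i j, 1 ≤ i → i < j → j ≤ n →
      List.Lex (· < ·) (T.rotate (sa i - 1)) (T.rotate (sa j - 1)))
    (hsa_surj : ∀ v, 1 ≤ v → v ≤ n → ∃ i, 1 ≤ i ∧ i ≤ n ∧ sa i = v)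
    (mod1 : ℕ → ℕ) (hmod1 : ∀ x, mod1 x = if x % n = 0 then n else x % n)
    (L : ℕ → α)
    (hL : ∀ i, 1 ≤ i → i ≤ n → T[mod1 (sa i - 1) - 1]? = some (L i))
    (C : α → ℕ) (hC : ∀ c, C c = T.countP (fun x => decide (x < c)))
    (rank : α → ℕ → ℕ)
    (hrank : ∀ c i, rank c i = ((Finset.Icc 1 i).filter (fun j => L j = c)).card)
    (I : List α → Set ℕ)
    (hI : ∀ W, I W = {i | 1 ≤ i ∧ i ≤ n ∧ W <+: T.rotate (sa i - 1)})
    (V : List α) (hVlen : V.length ≤ n - 1)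
    (i₁ j₁ : ℕ) (hij : i₁ ≤ j₁) (hIV : I V = Set.Icc i₁ j₁) :
    ∀ c : α,
      I (c :: V) = Set.Icc (C c + rank c (i₁ - 1) + 1) (C c + rank c j₁) ∧
      ((∃ i, i < n ∧ (c :: V) <+: T.rotate i) ↔ rank c (i₁ - 1) < rank c j₁) := by
  classical
  set R : ℕ → List α := fun i => T.rotate (sa i - 1) with hRdef
  -- bounds on i₁ j₁
  have hi₁ : 1 ≤ i₁ := by
    have h1 : i₁ ∈ I V := by rw [hIV]; exact Set.mem_Icc.mpr ⟨le_refl _, hij⟩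
    rw [hI] at h1; exact h1.1
  have hj₁ : j₁ ≤ n := by
    have h1 : j₁ ∈ I V := by rw [hIV]; exact Set.mem_Icc.mpr ⟨hij, le_refl _⟩
    rw [hI] at h1; exact h1.2.1
  have hlen : ∀ k, (T.rotate k).length = n := fun k => by
    rw [List.length_rotate, hn]
  -- order iso
  have horder : ∀ i j, 1 ≤ i → i ≤ n → 1 ≤ j → j ≤ n →
      (i < j ↔ List.Lex (· < ·) (R i) (R j)) := by
    intro i j hi1 hin hj1 hjn
    constructor
    · intro h; exact hsa_mono i j hi1 h hjn
    · intro h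
      rcases lt_trichotomy i j with h' | rfl | h'
      · exact h'
      · exact absurd h (asymm h)
      · exact absurd h (asymm (hsa_mono j i hj1 h' hin))
  have hRinj : ∀ i j, 1 ≤ i → i ≤ n → 1 ≤ j → j ≤ n → R i = R j → i = j := by
    intro i j hi1 hin hj1 hjn h
    rcases lt_trichotomy i j with h' | h' | h'
    · exact absurd ((horder i j hi1 hin hj1 hjn).mp h') (by rw [h]; exact fun hh => asymm hh hh)
    · exact h'
    · exact absurd ((horder j i hj1 hjn hi1 hin).mp h') (by rw [h]; exact fun hh => asymm hh hh)
  have hsainj : ∀ i j, 1 ≤ i → i ≤ n → 1 ≤ j → j ≤ n → sa i = sa j → i = j := by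
    intro i j hi1 hin hj1 hjn h
    exact hRinj i j hi1 hin hj1 hjn (by rw [hRdef]; simp [h])
  -- mod1 facts
  have hmodr : ∀ i, 1 ≤ i → i ≤ n →
      1 ≤ mod1 (sa i - 1) ∧ mod1 (sa i - 1) ≤ n ∧
      T.rotate (mod1 (sa i - 1)) = T.rotate (sa i - 1) := by
    intro i hi1 hin
    obtain ⟨h1, h2⟩ := hsa_range i hi1 hin
    rw [hmod1]
    rcases Nat.eq_or_lt_of_le h1 with he | hlt
    · have h0 : sa i - 1 = 0 := by omega
      have hm : (if (sa i - 1) % n = 0 then n else (sa i - 1) % n) = n := by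
        rw [h0]; simp
      rw [hm]
      refine ⟨hpos, le_refl n, ?_⟩
      rw [h0, List.rotate_zero, ← hn, List.rotate_length]
    · have hlt' : sa i - 1 < n := by omega
      have h0 : (sa i - 1) % n = sa i - 1 := Nat.mod_eq_of_lt hlt'
      rw [h0, if_neg (by omega)]
      exact ⟨by omega, by omega, rfl⟩
    -- define sigma (the LF-mapping on ranks)
  have hex : ∀ i, ∃ s, 1 ≤ i → i ≤ n → (1 ≤ s ∧ s ≤ n ∧ sa s = mod1 (sa i - 1)) := by
    intro i
    by_cases hi : 1 ≤ i ∧ i ≤ n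
    · obtain ⟨hm1, hm2, _⟩ := hmodr i hi.1 hi.2
      obtain ⟨s, hs⟩ := hsa_surj _ hm1 hm2
      exact ⟨s, fun _ _ => hs⟩
    · exact ⟨0, fun h1 h2 => absurd ⟨h1, h2⟩ hi⟩
  choose σ hσ using hex
  -- structure of R (σ i)
  have hRσ : ∀ i, 1 ≤ i → i ≤ n →
      R (σ i) = L i :: (R i).dropLast ∧ R i = (R i).dropLast ++ [L i] := by
    intro i hi1 hin
    obtain ⟨hs1, hs2, hs3⟩ := hσ i hi1 hin
    obtain ⟨hm1, hm2, hm3⟩ := hmodr i hi1 hin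
    have hXlen : (R (σ i)).length = n := hlen _
    have hXne : R (σ i) ≠ [] := by
      intro h; rw [h] at hXlen; simp at hXlen; omega
    obtain ⟨x, Xs, hX⟩ := List.exists_cons_of_ne_nil hXne
    have hrot1 : (R (σ i)).rotate 1 = R i := by
      show ((T.rotate (sa (σ i) - 1)).rotate 1) = T.rotate (sa i - 1)
      rw [List.rotate_rotate, hs3]
      have : mod1 (sa i - 1) - 1 + 1 = mod1 (sa i - 1) := by omega
      rw [this, hm3]
    have hRi : R i = Xs ++ [x] := by
      rw [← hrot1, hX, List.rotate_cons_succ, List.rotate_zero]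
    have hdl : (R i).dropLast = Xs := by rw [hRi, List.dropLast_concat]
    have hxL : x = L i := by
      have hk : 0 < (T.rotate (sa (σ i) - 1)).length := by rw [hlen]; omega
      have hg := List.getElem_rotate T (sa (σ i) - 1) 0 hk
      have hidx : (0 + (sa (σ i) - 1)) % T.length = mod1 (sa i - 1) - 1 := by
        rw [Nat.zero_add, hs3]; exact Nat.mod_eq_of_lt (by omega)
      have hsome : (T.rotate (sa (σ i) - 1))[0]? = some (L i) := by
        rw [List.getElem?_eq_getElem hk, hg, ← hL i hi1 hin,
          List.getElem?_eq_getElem (show mod1 (sa i - 1) - 1 < T.length by omega)]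
        simp only [hidx]
      rw [show T.rotate (sa (σ i) - 1) = R (σ i) from rfl, hX] at hsome
      simpa using hsome
    constructor
    · rw [hdl, ← hxL]; exact hX
    · rw [hdl, ← hxL]; exact hRi
  have hσr : ∀ i, 1 ≤ i → i ≤ n → 1 ≤ σ i ∧ σ i ≤ n := fun i h1 h2 =>
    ⟨(hσ i h1 h2).1, (hσ i h1 h2).2.1⟩
  have hσrot : ∀ i, 1 ≤ i → i ≤ n → (R (σ i)).rotate 1 = R i := by
    intro i h1 h2
    obtain ⟨ha, hb⟩ := hRσ i h1 h2
    rw [ha, List.rotate_cons_succ, List.rotate_zero, ← hb]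
  have hσinj : ∀ i j, 1 ≤ i → i ≤ n → 1 ≤ j → j ≤ n → σ i = σ j → i = j := by
    intro i j hi1 hin hj1 hjn h
    apply hRinj i j hi1 hin hj1 hjn
    rw [← hσrot i hi1 hin, ← hσrot j hj1 hjn, h]
  have hσsurj : ∀ s, 1 ≤ s → s ≤ n → ∃ i, 1 ≤ i ∧ i ≤ n ∧ σ i = s := by
    intro s hs1 hsn
    have hmem : s ∈ Finset.Icc 1 n := Finset.mem_Icc.mpr ⟨hs1, hsn⟩
    obtain ⟨a, ha, hae⟩ := Finset.surj_on_of_inj_on_of_card_le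
      (s := Finset.Icc 1 n) (t := Finset.Icc 1 n) (fun a _ => σ a)
      (fun a ha => by
        rw [Finset.mem_Icc] at ha ⊢
        exact hσr a ha.1 ha.2)
      (fun a₁ a₂ ha₁ ha₂ h => by
        rw [Finset.mem_Icc] at ha₁ ha₂
        exact hσinj a₁ a₂ ha₁.1 ha₁.2 ha₂.1 ha₂.2 h)
      (le_refl _) s hmem
    rw [Finset.mem_Icc] at ha
    exact ⟨a, ha.1, ha.2, hae.symm⟩
    -- rank facts
  have hrank0 : ∀ c', rank c' 0 = 0 := by intro c'; rw [hrank]; simp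
  have hrank_mono : ∀ c' a b, a ≤ b → rank c' a ≤ rank c' b := by
    intro c' a b hab
    rw [hrank, hrank]
    exact Finset.card_le_card (Finset.filter_subset_filter _ (Finset.Icc_subset_Icc_right hab))
  have hrank_step : ∀ c' i, 1 ≤ i → rank c' i = rank c' (i-1) + (if L i = c' then 1 else 0) := by
    intro c' i hi
    rw [hrank, hrank]
    have h1 : Finset.Icc 1 i = insert i (Finset.Icc 1 (i-1)) := by
      ext x; simp only [Finset.mem_Icc, Finset.mem_insert]; omega
    rw [h1, Finset.filter_insert]
    by_cases h : L i = c'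
    · rw [if_pos h, if_pos h, Finset.card_insert_of_notMem]
      intro hmem
      have := (Finset.mem_filter.mp hmem).1
      rw [Finset.mem_Icc] at this; omega
    · rw [if_neg h, if_neg h]; omega
  -- the LF formula
  have hLF : ∀ i, 1 ≤ i → i ≤ n → σ i = C (L i) + rank (L i) (i-1) + 1 := by
    intro i hi1 hin
    obtain ⟨hs1, hsn⟩ := hσr i hi1 hin
    obtain ⟨hRσ1, hRL1⟩ := hRσ i hi1 hin
    have hA : ((Finset.Icc 1 n).filter (fun k => k < σ i)).card = σ i - 1 := by
      have he : (Finset.Icc 1 n).filter (fun k => k < σ i) = Finset.Icc 1 (σ i - 1) := by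
        ext x; simp only [Finset.mem_filter, Finset.mem_Icc]; omega
      rw [he, Nat.card_Icc]; omega
    have hB : (Finset.Icc 1 n).filter (fun k => k < σ i)
        = (Finset.Icc 1 n).filter (fun k => List.Lex (· < ·) (R k) (R (σ i))) := by
      apply Finset.filter_congr
      intro k hk; rw [Finset.mem_Icc] at hk
      exact horder k (σ i) hk.1 hk.2 hs1 hsn
    have hkey : ∀ j, 1 ≤ j → j ≤ n →
        (List.Lex (· < ·) (R (σ j)) (R (σ i)) ↔ (L j < L i ∨ (L j = L i ∧ j < i))) := by
      intro j hj1 hjn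
      obtain ⟨hRσj, hRLj⟩ := hRσ j hj1 hjn
      rw [hRσj, hRσ1, lex_cc]
      have hll : (R j).dropLast.length = (R i).dropLast.length := by
        rw [List.length_dropLast, List.length_dropLast]
        have e1 : (R j).length = n := hlen _
        have e2 : (R i).length = n := hlen _
        rw [e1, e2]
      constructor
      · rintro (h | ⟨he, h⟩)
        · exact Or.inl h
        · refine Or.inr ⟨he, (horder j i hj1 hjn hi1 hin).mpr ?_⟩
          have h2 := (lex_concat (L i) _ _ hll).mpr h
          rw [← hRL1, ← he, ← hRLj] at h2
          exact h2
      · rintro (h | ⟨he, h⟩)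
        · exact Or.inl h
        · refine Or.inr ⟨he, ?_⟩
          have h2 := (horder j i hj1 hjn hi1 hin).mp h
          rw [hRLj, he, hRL1] at h2
          exact (lex_concat (L i) _ _ hll).mp h2
    have hC2 : ((Finset.Icc 1 n).filter (fun j => L j < L i ∨ (L j = L i ∧ j < i))).card
        = ((Finset.Icc 1 n).filter (fun k => List.Lex (· < ·) (R k) (R (σ i)))).card := by
      apply Finset.card_bij (i := fun j _ => σ j)
      · intro a ha
        rw [Finset.mem_filter, Finset.mem_Icc] at ha
        obtain ⟨⟨ha1, ha2⟩, hp⟩ := ha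
        rw [Finset.mem_filter, Finset.mem_Icc]
        exact ⟨⟨(hσr a ha1 ha2).1, (hσr a ha1 ha2).2⟩, (hkey a ha1 ha2).mpr hp⟩
      · intro a₁ ha₁ a₂ ha₂ h
        rw [Finset.mem_filter, Finset.mem_Icc] at ha₁ ha₂
        exact hσinj a₁ a₂ ha₁.1.1 ha₁.1.2 ha₂.1.1 ha₂.1.2 h
      · intro b hb
        rw [Finset.mem_filter, Finset.mem_Icc] at hb
        obtain ⟨⟨hb1, hb2⟩, hp⟩ := hb
        obtain ⟨j, hj1, hjn, hje⟩ := hσsurj b hb1 hb2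
        refine ⟨j, ?_, hje⟩
        rw [Finset.mem_filter, Finset.mem_Icc]
        refine ⟨⟨hj1, hjn⟩, (hkey j hj1 hjn).mp ?_⟩
        rw [hje]; exact hp
    have hsplit : ((Finset.Icc 1 n).filter (fun j => L j < L i ∨ (L j = L i ∧ j < i))).card
        = ((Finset.Icc 1 n).filter (fun j => L j < L i)).card
          + ((Finset.Icc 1 n).filter (fun j => L j = L i ∧ j < i)).card := by
      rw [Finset.filter_or, Finset.card_union_of_disjoint]
      rw [Finset.disjoint_left]
      intro a ha hb
      rw [Finset.mem_filter] at ha hb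
      exact absurd hb.2.1 (ne_of_lt ha.2)
    have hc2 : ((Finset.Icc 1 n).filter (fun j => L j = L i ∧ j < i)).card
        = rank (L i) (i-1) := by
      rw [hrank]
      congr 1
      ext x
      simp only [Finset.mem_filter, Finset.mem_Icc]
      constructor
      · rintro ⟨⟨h1, h2⟩, h3, h4⟩; exact ⟨⟨h1, by omega⟩, h3⟩
      · rintro ⟨⟨h1, h2⟩, h3⟩; exact ⟨⟨h1, by omega⟩, h3, by omega⟩
    have hc1 : ((Finset.Icc 1 n).filter (fun j => L j < L i)).card = C (L i) := by
      rw [hC, bws_countP_eq_sum, Finset.card_filter, hn]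
      refine Finset.sum_bij (i := fun j _ => sa (σ j) - 1) ?_ ?_ ?_ ?_
      · intro a ha
        rw [Finset.mem_Icc] at ha
        rw [Finset.mem_range]
        have h1 := hσr a ha.1 ha.2
        have h2 := hsa_range _ h1.1 h1.2
        show sa (σ a) - 1 < n
        omega
      · intro a₁ ha₁ a₂ ha₂ h
        rw [Finset.mem_Icc] at ha₁ ha₂
        have h1 := hσr a₁ ha₁.1 ha₁.2
        have h2 := hσr a₂ ha₂.1 ha₂.2
        have h3 := hsa_range _ h1.1 h1.2
        have h4 := hsa_range _ h2.1 h2.2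
        have h' : sa (σ a₁) - 1 = sa (σ a₂) - 1 := h
        have h5 : sa (σ a₁) = sa (σ a₂) := by omega
        exact hσinj a₁ a₂ ha₁.1 ha₁.2 ha₂.1 ha₂.2
          (hsainj _ _ h1.1 h1.2 h2.1 h2.2 h5)
      · intro q hq
        rw [Finset.mem_range] at hq
        obtain ⟨s', hs'1, hs'n, hs'e⟩ := hsa_surj (q+1) (by omega) (by omega)
        obtain ⟨j, hj1, hjn, hje⟩ := hσsurj s' hs'1 hs'n
        exact ⟨j, Finset.mem_Icc.mpr ⟨hj1, hjn⟩, show sa (σ j) - 1 = q by rw [hje, hs'e]; omega⟩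
      · intro a ha
        rw [Finset.mem_Icc] at ha
        have h1 : sa (σ a) = mod1 (sa a - 1) := (hσ a ha.1 ha.2).2.2
        have h2 : T[sa (σ a) - 1]? = some (L a) := by rw [h1]; exact hL a ha.1 ha.2
        simp [h2]
    have hfin : σ i - 1 = C (L i) + rank (L i) (i-1) := by
      rw [← hA, hB, ← hC2, hsplit, hc1, hc2]
    omega
  intro c
  -- characterization of membership in I (c :: V)
  have hmem : ∀ i', i' ∈ I (c :: V) ↔ ∃ i, i₁ ≤ i ∧ i ≤ j₁ ∧ L i = c ∧ σ i = i' := by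
    intro i'
    constructor
    · intro h
      rw [hI] at h
      obtain ⟨h1, h2, h3⟩ := h
      obtain ⟨i, hi1, hin, hie⟩ := hσsurj i' h1 h2
      obtain ⟨hRσ1, hRL1⟩ := hRσ i hi1 hin
      have hp : (c :: V) <+: R (σ i) := by rw [hie]; exact h3
      rw [hRσ1] at hp
      obtain ⟨hc, hV⟩ := List.cons_prefix_cons.mp hp
      have hVRi : V <+: R i := hV.trans (List.dropLast_prefix _)
      have hiIV : i ∈ I V := by
        rw [hI]; exact ⟨hi1, hin, hVRi⟩
      rw [hIV, Set.mem_Icc] at hiIV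
      exact ⟨i, hiIV.1, hiIV.2, hc.symm, hie⟩
    · rintro ⟨i, hii1, hij1, hLi, hie⟩
      have hi1 : 1 ≤ i := le_trans hi₁ hii1
      have hin : i ≤ n := le_trans hij1 hj₁
      have hiIV : i ∈ I V := by rw [hIV]; exact Set.mem_Icc.mpr ⟨hii1, hij1⟩
      rw [hI] at hiIV
      obtain ⟨-, -, hVRi⟩ := hiIV
      obtain ⟨hRσ1, hRL1⟩ := hRσ i hi1 hin
      have hVd : V <+: (R i).dropLast := by
        apply bws_prefix_dropLast hVRi
        show V.length ≤ (T.rotate (sa i - 1)).length - 1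
        rw [List.length_rotate, hn]
        exact hVlen
      have hp : (c :: V) <+: R (σ i) := by
        rw [hRσ1, hLi]
        exact List.cons_prefix_cons.mpr ⟨rfl, hVd⟩
      rw [hI]
      obtain ⟨hs1', hsn'⟩ := hσr i hi1 hin
      rw [← hie]
      exact ⟨hs1', hsn', hp⟩
  have hICV : I (c :: V) = Set.Icc (C c + rank c (i₁ - 1) + 1) (C c + rank c j₁) := by
    ext i'
    rw [hmem i', Set.mem_Icc]
    constructor
    · rintro ⟨i, hii1, hij1, hLi, hie⟩
      have hi1 : 1 ≤ i := le_trans hi₁ hii1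
      have hin : i ≤ n := le_trans hij1 hj₁
      have hσi := hLF i hi1 hin
      rw [hLi] at hσi
      have hstep : rank c i = rank c (i-1) + 1 := by
        rw [hrank_step c i hi1, if_pos hLi]
      have hm1 : rank c (i₁ - 1) ≤ rank c (i - 1) := hrank_mono _ _ _ (by omega)
      have hm2 : rank c i ≤ rank c j₁ := hrank_mono _ _ _ hij1
      omega
    · rintro ⟨hlow, hhigh⟩
      set r := i' - C c with hr
      have hrange : rank c (i₁ - 1) + 1 ≤ r ∧ r ≤ rank c j₁ := by omega
      have hexr : ∃ m, r ≤ rank c m := ⟨j₁, hrange.2⟩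
      set i := Nat.find hexr with hidef
      have hile : i ≤ j₁ := Nat.find_le hrange.2
      have hfind : r ≤ rank c i := Nat.find_spec hexr
      have hi0 : 1 ≤ i := by
        rcases Nat.eq_zero_or_pos i with h0 | h1
        · have h2 := hfind
          rw [h0, hrank0] at h2
          omega
        · exact h1
      have hprev : ¬ (r ≤ rank c (i - 1)) := Nat.find_min hexr (by omega)
      have hstep := hrank_step c i hi0
      have hLi : L i = c := by
        by_contra hne
        rw [if_neg hne] at hstep
        omega
      rw [if_pos hLi] at hstep
      have hige : i₁ ≤ i := by
        by_contra hlt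
        push_neg at hlt
        have : rank c i ≤ rank c (i₁ - 1) := hrank_mono _ _ _ (by omega)
        omega
      have hin : i ≤ n := le_trans hile hj₁
      have hσi := hLF i hi0 hin
      rw [hLi] at hσi
      exact ⟨i, hige, hile, hLi, by omega⟩
  refine ⟨hICV, ?_, ?_⟩
  · rintro ⟨k, hk, hpre⟩
    obtain ⟨s', hs'1, hs'n, hs'e⟩ := hsa_surj (k+1) (by omega) (by omega)
    have hm : s' ∈ I (c :: V) := by
      rw [hI]
      refine ⟨hs'1, hs'n, ?_⟩
      rw [hs'e]
      simpa using hpre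
    rw [hICV, Set.mem_Icc] at hm
    omega
  · intro hlt
    have hne : C c + rank c (i₁ - 1) + 1 ∈ I (c :: V) := by
      rw [hICV, Set.mem_Icc]
      omega
    rw [hI] at hne
    obtain ⟨h1, h2, h3⟩ := hne
    obtain ⟨hb1, hb2⟩ := hsa_range _ h1 h2
    exact ⟨sa (C c + rank c (i₁ - 1) + 1) - 1, by omega, h3⟩
end

section
/- Let T be a string of length n whose n rotations are pairwise lexicographically distinct. Define LCP_T[1] = 0 and, for 2 ≤ i ≤ n, LCP_T[i] = the length of the longest common prefix of the rotations of T of lexicographic ranks i−1 and i; define the permuted LCP array by PLCP_T[SA_T[i]] = LCP_T[i] for all i ∈ [1..n]. Then for every position 1 ≤ p ≤ n−1, PLCP_T[p+1] ≥ PLCP_T[p] − 1. -/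
private lemma lex_append_of_length_eq {α : Type*} [Preorder α] :
    ∀ (u v s t : List α), List.Lex (· < ·) u v → u.length = v.length →
      List.Lex (· < ·) (u ++ s) (v ++ t) := by
  intro u
  induction u with
  | nil =>
    intro v s t h hl
    cases h with
    | nil => simp at hl
  | cons a u ih =>
    intro v s t h hl
    cases h with
    | rel hr => exact List.Lex.rel hr
    | cons h' =>
      exact List.Lex.cons (ih _ s t h' (by simpa using hl))

private lemma take_sandwich {α : Type*} [LinearOrder α] :
    ∀ (m : ℕ) (a b c : List α),
      (List.Lex (· < ·) a b ∨ a = b) → (List.Lex (· < ·) b c ∨ b = c) →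
      a.take m = c.take m → b.take m = a.take m
  | 0, _, _, _, _, _, _ => by simp
  | m + 1, a, b, c, hab, hbc, hac => by
    cases a with
    | nil =>
      have hc : c.take (m + 1) = [] := by simpa using hac.symm
      have hc' : c = [] := by
        cases c with
        | nil => rfl
        | cons x c' => simp [List.take_succ_cons] at hc
      subst hc'
      rcases hbc with h | h
      · exact absurd h List.not_lex_nil
      · simp [h]
    | cons x a' =>
      cases c with
      | nil => simp [List.take_succ_cons] at hac
      | cons y c' =>
        rw [List.take_succ_cons, List.take_succ_cons] at hac
        have hxy : x = y := (List.cons.injEq _ _ _ _ ▸ hac).1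
        have hac' : a'.take m = c'.take m := (List.cons.injEq _ _ _ _ ▸ hac).2
        subst hxy
        rcases hab with h | h
        · cases h with
          | rel hr =>
            -- b = z :: b' with x < z
            rename_i z b'
            rcases hbc with h' | h'
            · cases h' with
              | rel hr2 => exact absurd hr2 (lt_asymm hr)
              | cons h2 => exact absurd hr (lt_irrefl _)
            · have : z = x := (List.cons.injEq _ _ _ _ ▸ h').1
              subst this
              exact absurd hr (lt_irrefl _)
          | cons h1 =>
            rename_i b'
            rcases hbc with h' | h'
            · cases h' with
              | rel hr2 => exact absurd hr2 (lt_irrefl _)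
              | cons h2 =>
                have := take_sandwich m a' b' c' (Or.inl h1) (Or.inl h2) hac'
                simp [List.take_succ_cons, this]
            · rw [h', List.take_succ_cons, List.take_succ_cons, hac']
        · simp [← h]

/-- the permuted LCP array satisfies `PLCP[p+1] ≥ PLCP[p] − 1`.
Here `sa` is the (1-based) suffix array of `T`, `LCP i` is the length of the longest
common prefix of the rotations of lexicographic ranks `i−1` and `i` (with
`LCP 1 = 0`), and `PLCP` is the permutation of `LCP` in string order, i.e.
`PLCP (sa i) = LCP i`. -/
theorem plcp_delta_monotone {α : Type*} [LinearOrder α]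
    (T : List α) (n : ℕ) (hn : T.length = n) (hpos : 1 ≤ n)
    (hdistinct : ∀ i j, i < n → j < n → T.rotate i = T.rotate j → i = j)
    (sa : ℕ → ℕ)
    (hsa_range : ∀ i, 1 ≤ i → i ≤ n → 1 ≤ sa i ∧ sa i ≤ n)
    (hsa_mono : ∀ i j, 1 ≤ i → i < j → j ≤ n →
      List.Lex (· < ·) (T.rotate (sa i - 1)) (T.rotate (sa j - 1)))
    (hsa_surj : ∀ v, 1 ≤ v → v ≤ n → ∃ i, 1 ≤ i ∧ i ≤ n ∧ sa i = v)
    (LCP : ℕ → ℕ) (hLCP1 : LCP 1 = 0)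
    (hLCP : ∀ i, 2 ≤ i → i ≤ n →
      IsGreatest {l | (T.rotate (sa (i - 1) - 1)).take l
        = (T.rotate (sa i - 1)).take l} (LCP i))
    (PLCP : ℕ → ℕ) (hPLCP : ∀ i, 1 ≤ i → i ≤ n → PLCP (sa i) = LCP i) :
    ∀ p, 1 ≤ p → p ≤ n - 1 → PLCP p - 1 ≤ PLCP (p + 1) := by
  have hasymm : ∀ x y : List α, List.Lex (· < ·) x y → ¬ List.Lex (· < ·) y x := by
    intro x y h h'
    exact (List.Lex.asymm (· < ·)).asymm x y h h'
  intro p hp1 hpn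
  have hpn' : p ≤ n := le_trans hpn (Nat.sub_le n 1)
  have hp1n : p + 1 ≤ n := by omega
  obtain ⟨i, hi1, hin, hip⟩ := hsa_surj p hp1 hpn'
  have hPp : PLCP p = LCP i := by rw [← hip]; exact hPLCP i hi1 hin
  rcases eq_or_lt_of_le hi1 with h1 | hi2
  · rw [hPp, ← h1, hLCP1]; simp
  have hi2 : 2 ≤ i := hi2
  rcases Nat.eq_zero_or_pos (LCP i) with h0 | hl1
  · rw [hPp, h0]; simp
  obtain ⟨m, hm⟩ : ∃ m, LCP i = m + 1 := ⟨LCP i - 1, by omega⟩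
  set q := sa (i - 1) with hq
  obtain ⟨hq1, hqn⟩ := hsa_range (i - 1) (by omega) (by omega)
  have hlex : List.Lex (· < ·) (T.rotate (q - 1)) (T.rotate (p - 1)) := by
    have := hsa_mono (i - 1) i (by omega) (by omega) hin
    rwa [hip] at this
  have htake : (T.rotate (q - 1)).take (LCP i) = (T.rotate (p - 1)).take (LCP i) := by
    have := (hLCP i hi2 hin).1
    rwa [hip] at this
  have hlenA : (T.rotate (q - 1)).length = n := by rw [List.length_rotate, hn]
  have hlenB : (T.rotate (p - 1)).length = n := by rw [List.length_rotate, hn]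
  have hne : T.rotate (q - 1) ≠ T.rotate (p - 1) := by
    intro h; rw [h] at hlex; exact hasymm _ _ hlex hlex
  have hlen : LCP i ≤ n := by
    by_contra h
    push_neg at h
    apply hne
    have h1 : (T.rotate (q - 1)).take (LCP i) = T.rotate (q - 1) :=
      List.take_of_length_le (by omega)
    have h2 : (T.rotate (p - 1)).take (LCP i) = T.rotate (p - 1) :=
      List.take_of_length_le (by omega)
    rw [← h1, htake, h2]
  -- destructure the two rotations
  obtain ⟨c, u, hA⟩ := List.exists_cons_of_ne_nil
    (show T.rotate (q - 1) ≠ [] by intro h; rw [h] at hlenA; simp at hlenA; omega)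
  obtain ⟨d, v, hB⟩ := List.exists_cons_of_ne_nil
    (show T.rotate (p - 1) ≠ [] by intro h; rw [h] at hlenB; simp at hlenB; omega)
  rw [hA, hB, hm, List.take_succ_cons, List.take_succ_cons] at htake
  have hcd : c = d := (List.cons.injEq _ _ _ _ ▸ htake).1
  have htake' : u.take m = v.take m := (List.cons.injEq _ _ _ _ ▸ htake).2
  subst hcd
  have hlexuv : List.Lex (· < ·) u v := by
    rw [hA, hB] at hlex
    exact List.lex_cons_iff.1 hlex
  have hlenu : u.length = n - 1 := by rw [hA] at hlenA; simp at hlenA; omega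
  have hlenv : v.length = n - 1 := by rw [hB] at hlenB; simp at hlenB; omega
  -- next rotations
  have hAq : T.rotate q = u ++ [c] := by
    have hq' : q - 1 + 1 = q := by omega
    rw [← hq', ← List.rotate_rotate, hA, List.rotate_cons_succ, List.rotate_zero]
  have hBp : T.rotate p = v ++ [c] := by
    have hp' : p - 1 + 1 = p := by omega
    rw [← hp', ← List.rotate_rotate, hB, List.rotate_cons_succ, List.rotate_zero]
  have hlex2 : List.Lex (· < ·) (T.rotate q) (T.rotate p) := by
    rw [hAq, hBp]
    exact lex_append_of_length_eq u v [c] [c] hlexuv (by omega)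
  have htake2 : (T.rotate q).take m = (T.rotate p).take m := by
    rw [hAq, hBp, List.take_append_of_le_length (by omega),
      List.take_append_of_le_length (by omega), htake']
  -- position of rotation T.rotate q is q' := q % n + 1
  set q' := q % n + 1 with hq'def
  have hrotq' : T.rotate (q' - 1) = T.rotate q := by
    have : q' - 1 = q % n := by omega
    rw [this, ← hn, List.rotate_mod]
  have hq'1 : 1 ≤ q' := by omega
  have hq'n : q' ≤ n := by
    have := Nat.mod_lt q (show 0 < n by omega)
    omega
  obtain ⟨r, hr1, hrn, hrq⟩ := hsa_surj q' hq'1 hq'n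
  obtain ⟨j, hj1, hjn, hjp⟩ := hsa_surj (p + 1) (by omega) hp1n
  -- rank of q' is below rank of p+1
  have hrj : r < j := by
    rcases lt_trichotomy r j with h | h | h
    · exact h
    · exfalso
      rw [h, hjp] at hrq
      have he : T.rotate q = T.rotate p := by
        rw [← hrotq', ← hrq]
        simp
      rw [he] at hlex2
      exact hasymm _ _ hlex2 hlex2
    · exfalso
      have := hsa_mono j r hj1 h hrn
      rw [hrq, hjp, hrotq'] at this
      have h2 : p + 1 - 1 = p := by omega
      rw [h2] at this
      exact hasymm _ _ hlex2 this
  have hj2 : 2 ≤ j := by omega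
  -- the lex predecessor of p+1
  have hchain1 : List.Lex (· < ·) (T.rotate q) (T.rotate (sa (j - 1) - 1)) ∨
      T.rotate q = T.rotate (sa (j - 1) - 1) := by
    rcases eq_or_lt_of_le (show r ≤ j - 1 by omega) with h | h
    · right; rw [← h, hrq, hrotq']
    · left
      have := hsa_mono r (j - 1) hr1 h (by omega)
      rwa [hrq, hrotq'] at this
  have hchain2 : List.Lex (· < ·) (T.rotate (sa (j - 1) - 1)) (T.rotate p) := by
    have := hsa_mono (j - 1) j (by omega) (by omega) hjn
    rw [hjp] at this
    have h2 : p + 1 - 1 = p := by omega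
    rwa [h2] at this
  have hmid : (T.rotate (sa (j - 1) - 1)).take m = (T.rotate q).take m :=
    take_sandwich m (T.rotate q) (T.rotate (sa (j - 1) - 1)) (T.rotate p)
      hchain1 (Or.inl hchain2) htake2
  have hmem : m ∈ {l | (T.rotate (sa (j - 1) - 1)).take l = (T.rotate (sa j - 1)).take l} := by
    show (T.rotate (sa (j - 1) - 1)).take m = (T.rotate (sa j - 1)).take m
    rw [hjp]
    have h2 : p + 1 - 1 = p := by omega
    rw [h2, hmid, htake2]
  have hLCPj : m ≤ LCP j := (hLCP j hj2 hjn).2 hmem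
  have hPp1 : PLCP (p + 1) = LCP j := by rw [← hjp]; exact hPLCP j hj1 hjn
  rw [hPp, hPp1, hm]
  omega
end

section
/- Let T ∈ Σ^n, let # ∉ Σ be strictly smaller than every character of Σ, and let T# be T with # appended. If aWb is a minimal absent word of T, where a, b ∈ Σ and W is a string over Σ, then W is a maximal repeat of T#, i.e., W is both a left-maximal repeat and a right-maximal repeat of T#. (Only a maximal repeat of T can be the infix W of a minimal absent word aWb.) -/
/-- `W` is a minimal absent word of `T`. -/
def IsMinimalAbsentWord {α : Type*} (T W : List α) : Prop :=
  ¬ (W <:+: T) ∧ ∀ V, V <:+: W → V.length < W.length → V <:+: T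

lemma infix_prefix_rotate {α : Type*} (L U : List α) (h : U <:+: L) (hU : U ≠ []) :
    ∃ i < L.length, U <+: L.rotate i := by
  obtain ⟨s, t, rfl⟩ := h
  have hUl : 0 < U.length := List.length_pos_iff.mpr hU
  refine ⟨s.length, by simp; omega, ?_⟩
  rw [List.rotate_eq_drop_append_take (by simp), List.append_assoc, List.drop_left,
    List.take_left, List.append_assoc]
  exact List.prefix_append _ _

/-- if `aWb` is a minimal absent word of `T`, where the terminator `#`
is strictly smaller than every character of the alphabet, then `W` is a maximal
repeat of `T#`, i.e. both a left-maximal and a right-maximal repeat of `T#`. -/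
theorem maw_infix_isMaximalRepeat {α : Type*} [LinearOrder α]
    (T : List α) (n : ℕ) (hn : T.length = n)
    (hash : α) (hhashT : ∀ c ∈ T, hash < c)
    (a b : α) (ha : hash < a) (hb : hash < b) (W : List α)
    (hmaw : IsMinimalAbsentWord T (a :: (W ++ [b]))) :
    IsLeftMaximalRepeat (T ++ [hash]) W ∧ IsRightMaximalRepeat (T ++ [hash]) W := by
  obtain ⟨habs, hmin⟩ := hmaw
  have haW : (a :: W) <:+: T := by
    refine hmin _ ?_ (by simp)
    exact (List.cons_prefix_cons.mpr ⟨rfl, List.prefix_append W [b]⟩).isInfix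
  have hWb : (W ++ [b]) <:+: T := by
    refine hmin _ ?_ (by simp)
    exact (List.suffix_cons a (W ++ [b])).isInfix
  have hTpre : T <+: T ++ [hash] := List.prefix_append T [hash]
  have hlen : W.length + 1 ≤ T.length := by
    have := haW.length_le; simpa using this
  have hlen' : W.length < (T ++ [hash]).length := by simp; omega
  -- right-maximal part
  have hR : IsRightMaximalRepeat (T ++ [hash]) W := by
    have h1 : ∃ c, c ≠ b ∧ (W ++ [c]) <:+: (T ++ [hash]) := by
      obtain ⟨s, t, hst⟩ := haW
      cases t with
      | nil =>
        refine ⟨hash, hb.ne, s ++ [a], [], ?_⟩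
        rw [← hst]; simp
      | cons c t' =>
        have hcb : c ≠ b := by
          rintro rfl
          exact habs ⟨s, t', by rw [← hst]; simp⟩
        refine ⟨c, hcb, ((?_ : (W ++ [c]) <:+: T).trans hTpre.isInfix)⟩
        exact ⟨s ++ [a], t', by rw [← hst]; simp⟩
    obtain ⟨c, hcb, h1⟩ := h1
    have h2 : (W ++ [b]) <:+: (T ++ [hash]) := hWb.trans hTpre.isInfix
    obtain ⟨i, hi, hpi⟩ := infix_prefix_rotate _ _ h1 (by simp)
    obtain ⟨j, hj, hpj⟩ := infix_prefix_rotate _ _ h2 (by simp)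
    have hij : i ≠ j := by
      rintro rfl
      apply hcb
      have e1 := List.prefix_iff_eq_take.mp hpi
      have e2 := List.prefix_iff_eq_take.mp hpj
      have : W ++ [c] = W ++ [b] := by rw [e1, e2]; simp
      simpa using this
    exact ⟨hlen', i, j, c, b, hi, hj, hij, hcb, hpi, hpj⟩
  -- left-maximal part
  have hL : IsLeftMaximalRepeat (T ++ [hash]) W := by
    have h3 : ∃ c, c ≠ a ∧ ∃ k < (T ++ [hash]).length, (c :: W) <+: (T ++ [hash]).rotate k := by
      obtain ⟨s, t, hst⟩ := hWb
      rcases s.eq_nil_or_concat with rfl | ⟨s₀, c, rfl⟩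
      · refine ⟨hash, ha.ne, T.length, by simp, ?_⟩
        rw [List.rotate_eq_drop_append_take (by simp), List.drop_left, List.take_left]
        simp only [List.singleton_append, List.cons_prefix_cons, true_and]
        exact ⟨[b] ++ t, by rw [← hst]; simp⟩
      · have hca : c ≠ a := by
          rintro rfl
          exact habs ⟨s₀, t, by rw [← hst]; simp⟩
        refine ⟨c, hca, ?_⟩
        refine infix_prefix_rotate _ _ ?_ (by simp)
        refine ((?_ : (c :: W) <:+: T).trans hTpre.isInfix)
        exact ⟨s₀, [b] ++ t, by rw [← hst]; simp⟩
    obtain ⟨c, hca, k, hk, hpk⟩ := h3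
    have h4 : (a :: W) <:+: (T ++ [hash]) := haW.trans hTpre.isInfix
    obtain ⟨i, hi, hpi⟩ := infix_prefix_rotate _ _ h4 (by simp)
    have hik : i ≠ k := by
      rintro rfl
      apply hca
      have e1 := List.prefix_iff_eq_take.mp hpi
      have e2 := List.prefix_iff_eq_take.mp hpk
      have : a :: W = c :: W := by rw [e1, e2]; simp
      simpa using this.symm
    exact ⟨hlen', i, k, a, c, hi, hk, hik, fun h => hca h.symm, hpi, hpk⟩
  exact ⟨hL, hR⟩
end

section
/- Let T ∈ Σ^n, let # ∉ Σ, and let T# be T with # appended. For a factor W of T# not containing #, let r(W) be the number of distinct characters c ∈ Σ ∪ {#} such that W·c is a factor of T#, and call W right-maximal in T# if r(W) ≥ 2 (equivalently, W occurs at two positions of T# followed by distinct characters). Then for every integer 1 ≤ k ≤ n, the number of distinct strings of length k over Σ that are factors of T equals (n + 1 − k) + Σ_{W} (1 − r(W)), where the (finite) sum ranges over all right-maximal factors W of T# not containing # with |W| ≥ k. (Telescoping identity underlying the computation of the k-mer complexity C(T,k).) -/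
open List Finset

section KmerTel

variable {α : Type*}

private theorem kt_finite_infix (L : List α) : {W : List α | W <:+: L}.Finite := by
  classical
  exact Set.Finite.subset L.sublists.toFinset.finite_toSet
    (fun W hW => by simpa using (hW : W <:+: L).sublist)

private theorem kt_finite_ext (W L : List α) : {c : α | W ++ [c] <:+: L}.Finite := by
  have h : {c : α | W ++ [c] <:+: L} = (fun c => W ++ [c]) ⁻¹' {V : List α | V <:+: L} := rfl
  rw [h]
  apply Set.Finite.preimage _ (kt_finite_infix L)
  intro c _ d _ hcd
  simpa using hcd

private theorem kt_infix_snoc {x : α} {W L : List α} (hW : x ∉ W) :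
    W <:+: L ++ [x] ↔ W <:+: L := by
  constructor
  · intro h
    have h' : W.reverse <:+: x :: L.reverse := by
      simpa using List.reverse_infix.mpr h
    rcases List.infix_cons_iff.mp h' with hp | hi
    · cases hrev : W.reverse with
      | nil =>
        have : W = [] := by simpa using congrArg List.reverse hrev
        simp [this]
      | cons a u =>
        rw [hrev] at hp
        have ha : a = x := (List.cons_prefix_cons.mp hp).1
        have haW : a ∈ W := by
          have : a ∈ W.reverse := by rw [hrev]; exact List.mem_cons_self
          simpa using this
        exact absurd (ha ▸ haW) hW
    · exact List.reverse_infix.mp hi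
  · intro h
    exact h.trans (L.prefix_append [x]).isInfix

private theorem kt_infix_snoc_mem {x : α} {W L : List α} (hx : x ∉ L) (hxW : x ∈ W)
    (h : W <:+: L ++ [x]) : W <:+ L ++ [x] := by
  have h' : W.reverse <:+: x :: L.reverse := by
    simpa using List.reverse_infix.mpr h
  rcases List.infix_cons_iff.mp h' with hp | hi
  · have hp' : W.reverse <+: (L ++ [x]).reverse := by simpa using hp
    exact List.reverse_prefix.mp hp'
  · exact absurd ((List.reverse_infix.mp hi).sublist.subset hxW) hx

private theorem kt_suffix_unique {W V L : List α} (hW : W <:+ L) (hV : V <:+ L)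
    (h : W.length = V.length) : W = V := by
  rw [List.suffix_iff_eq_drop] at hW hV
  rw [hW, hV, h]

private theorem kt_r_pos (T : List α) (hash : α) {W : List α} (h : W <:+: T) :
    1 ≤ {c : α | W ++ [c] <:+: T ++ [hash]}.ncard := by
  have hfin := kt_finite_ext W (T ++ [hash])
  rw [Nat.succ_le_iff, Set.ncard_pos hfin]
  obtain ⟨s, t, hst⟩ := h
  cases t with
  | nil =>
    refine ⟨hash, s, [], ?_⟩
    simp only [List.append_nil] at hst
    simp [← List.append_assoc, hst]
  | cons c t' =>
    refine ⟨c, s, t' ++ [hash], ?_⟩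
    have : s ++ (W ++ [c]) ++ t' = T := by
      simpa [List.append_assoc] using hst
    simp [← this, List.append_assoc]

/-- Core counting identity: summing the number of right extensions over all
length-`m` factors of `T` counts length-`(m+1)` factors of `T` plus one. -/
private theorem kt_count_step [DecidableEq α] (T : List α) (hash : α) (hhash : hash ∉ T)
    (m : ℕ) (hm : m ≤ T.length) :
    ∑ W ∈ (T ++ [hash]).sublists.toFinset.filter
        (fun W => W.length = m ∧ W <:+: T),
      {c : α | W ++ [c] <:+: T ++ [hash]}.ncard
    = {V : List α | V.length = m + 1 ∧ V <:+: T}.ncard + 1 := by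
  set L := T ++ [hash] with hL
  set 𝒜 : Finset (List α) := L.sublists.toFinset.filter
      (fun V => V <:+: L ∧ V.length = m + 1 ∧ hash ∉ V.dropLast) with h𝒜
  set ℱ : Finset (List α) := L.sublists.toFinset.filter
      (fun W => W.length = m ∧ W <:+: T) with hℱ
  -- membership characterizations
  have memA : ∀ V, V ∈ 𝒜 ↔ V <:+: L ∧ V.length = m + 1 ∧ hash ∉ V.dropLast := by
    intro V
    simp only [h𝒜, Finset.mem_filter, List.mem_toFinset, List.mem_sublists]
    exact ⟨fun h => h.2, fun h => ⟨h.1.sublist, h⟩⟩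
  have memF : ∀ W, W ∈ ℱ ↔ W.length = m ∧ W <:+: T := by
    intro W
    simp only [hℱ, Finset.mem_filter, List.mem_toFinset, List.mem_sublists]
    refine ⟨fun h => h.2, fun h => ⟨?_, h⟩⟩
    exact h.2.sublist.trans (List.sublist_append_left T [hash])
  -- Step A: fiberwise count
  have hfiber : 𝒜.card = ∑ W ∈ ℱ, (𝒜.filter (fun V => V.dropLast = W)).card := by
    apply Finset.card_eq_sum_card_fiberwise
    intro V hV
    rw [Finset.mem_coe, memA] at hV
    obtain ⟨hVL, hVlen, hVd⟩ := hV
    rw [Finset.mem_coe, memF]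
    constructor
    · rw [List.length_dropLast, hVlen]; omega
    · have h1 : V.dropLast <:+: L := (List.dropLast_prefix V).isInfix.trans hVL
      exact (kt_infix_snoc hVd).mp h1
  -- Step B: each fiber has size `r W`
  have hfib : ∀ W ∈ ℱ, (𝒜.filter (fun V => V.dropLast = W)).card
      = {c : α | W ++ [c] <:+: L}.ncard := by
    intro W hW
    rw [memF] at hW
    have hWh : hash ∉ W := fun h => hhash (hW.2.sublist.subset h)
    have himg : 𝒜.filter (fun V => V.dropLast = W)
        = (kt_finite_ext W L).toFinset.image (fun c => W ++ [c]) := by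
      ext V
      simp only [Finset.mem_filter, Finset.mem_image, Set.Finite.mem_toFinset,
        Set.mem_setOf_eq]
      constructor
      · rintro ⟨hVA, hVd⟩
        rw [memA] at hVA
        obtain ⟨hVL, hVlen, _⟩ := hVA
        have hVne : V ≠ [] := by
          intro h; rw [h] at hVlen; simp at hVlen
        refine ⟨V.getLast hVne, ?_, ?_⟩
        · rw [← hVd, List.dropLast_append_getLast hVne]; exact hVL
        · rw [← hVd, List.dropLast_append_getLast hVne]
      · rintro ⟨c, hc, rfl⟩
        refine ⟨?_, List.dropLast_concat⟩
        rw [memA]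
        refine ⟨hc, ?_, ?_⟩
        · simp [hW.1]
        · rw [List.dropLast_concat]; exact hWh
    rw [himg, Finset.card_image_of_injective _ (fun c d h => by simpa using h),
      Set.ncard_eq_toFinset_card _ (kt_finite_ext W L)]
  -- Step C: |𝒜| = C(m+1) + 1
  have hsplit : 𝒜.card = {V : List α | V.length = m + 1 ∧ V <:+: T}.ncard + 1 := by
    have hpart := Finset.card_filter_add_card_filter_not
      (s := 𝒜) (p := fun V => hash ∉ V)
    have h1 : ((𝒜.filter (fun V => hash ∉ V)) : Set (List α))
        = {V : List α | V.length = m + 1 ∧ V <:+: T} := by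
      ext V
      simp only [Finset.coe_filter, Set.mem_setOf_eq, memA]
      constructor
      · rintro ⟨⟨hVL, hVlen, _⟩, hVh⟩
        exact ⟨hVlen, (kt_infix_snoc hVh).mp hVL⟩
      · rintro ⟨hVlen, hVT⟩
        have hVh : hash ∉ V := fun h => hhash (hVT.sublist.subset h)
        exact ⟨⟨(kt_infix_snoc hVh).mpr hVT, hVlen,
          fun h => hVh (List.dropLast_sublist V |>.subset h)⟩, hVh⟩
    have h1' : (𝒜.filter (fun V => hash ∉ V)).card
        = {V : List α | V.length = m + 1 ∧ V <:+: T}.ncard := by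
      rw [← Set.ncard_coe_finset, h1]
    have h2 : 𝒜.filter (fun V => ¬ hash ∉ V) = {T.drop (T.length - m) ++ [hash]} := by
      have hV₀len : (T.drop (T.length - m)).length = m := by
        rw [List.length_drop, Nat.sub_sub_self hm]
      have hV₀suf : T.drop (T.length - m) ++ [hash] <:+ L := by
        rw [hL, ← List.drop_append_of_le_length (Nat.sub_le _ _)]
        exact List.drop_suffix _ _
      ext V
      simp only [Finset.mem_filter, Finset.mem_singleton, not_not, memA]
      constructor
      · rintro ⟨⟨hVL, hVlen, hVd⟩, hVh⟩
        have hsuf : V <:+ L := kt_infix_snoc_mem hhash hVh hVL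
        apply kt_suffix_unique hsuf hV₀suf
        rw [hVlen]; simp [hV₀len]
      · rintro rfl
        have hh : hash ∉ T.drop (T.length - m) :=
          fun h => hhash ((List.drop_sublist _ _).subset h)
        refine ⟨⟨hV₀suf.isInfix, by simp [hV₀len], ?_⟩, by simp⟩
        rw [List.dropLast_concat]; exact hh
    have h2' : (𝒜.filter (fun V => ¬ hash ∉ V)).card = 1 := by rw [h2]; simp
    omega
  calc ∑ W ∈ ℱ, {c : α | W ++ [c] <:+: L}.ncard
      = ∑ W ∈ ℱ, (𝒜.filter (fun V => V.dropLast = W)).card :=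
        (Finset.sum_congr rfl (fun W hW => (hfib W hW).symm))
    _ = 𝒜.card := hfiber.symm
    _ = _ := hsplit

end KmerTel

/-- the telescoping identity for the `k`-mer complexity.  For
`W` a factor of `T# = T ++ [#]` not containing `#`, `r W` is the number of distinct
characters `c` such that `W·c` is a factor of `T#`; `W` is right-maximal in `T#`
when `r W ≥ 2`.  Then, for `1 ≤ k ≤ n`, the number of distinct length-`k` factors
of `T` equals `(n + 1 − k) + Σ_W (1 − r W)`, the sum ranging over the right-maximal
factors `W` of `T#` not containing `#` with `|W| ≥ k`. -/
theorem kmer_complexity_telescoping {α : Type*} (T : List α) (n : ℕ)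
    (hn : T.length = n) (hash : α) (hhash : hash ∉ T)
    (r : List α → ℕ)
    (hr : ∀ W, r W = {c : α | (W ++ [c]) <:+: (T ++ [hash])}.ncard)
    (k : ℕ) (hk1 : 1 ≤ k) (hkn : k ≤ n) :
    ({W : List α | W.length = k ∧ W <:+: T}.ncard : ℤ)
      = ((n : ℤ) + 1 - (k : ℤ))
        + ∑ᶠ W ∈ {W : List α | hash ∉ W ∧ W <:+: (T ++ [hash]) ∧
            2 ≤ r W ∧ k ≤ W.length}, (1 - (r W : ℤ)) := by
  classical
  subst hn
  set L := T ++ [hash] with hL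
  set n := T.length with hn
  -- finsets of right-maximal factors
  set 𝒢 : ℕ → Finset (List α) := fun m => L.sublists.toFinset.filter
      (fun W => hash ∉ W ∧ W <:+: L ∧ 2 ≤ r W ∧ m ≤ W.length) with h𝒢
  set 𝒮 : ℕ → Finset (List α) := fun m => L.sublists.toFinset.filter
      (fun W => hash ∉ W ∧ W <:+: L ∧ 2 ≤ r W ∧ W.length = m) with h𝒮
  have mem𝒢 : ∀ m W, W ∈ 𝒢 m ↔ hash ∉ W ∧ W <:+: L ∧ 2 ≤ r W ∧ m ≤ W.length := by
    intro m W
    simp only [h𝒢, Finset.mem_filter, List.mem_toFinset, List.mem_sublists]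
    exact ⟨fun h => h.2, fun h => ⟨h.2.1.sublist, h⟩⟩
  have mem𝒮 : ∀ m W, W ∈ 𝒮 m ↔ hash ∉ W ∧ W <:+: L ∧ 2 ≤ r W ∧ W.length = m := by
    intro m W
    simp only [h𝒮, Finset.mem_filter, List.mem_toFinset, List.mem_sublists]
    exact ⟨fun h => h.2, fun h => ⟨h.2.1.sublist, h⟩⟩
  -- single step identity
  have hstep : ∀ m, m ≤ n →
      ({W : List α | W.length = m ∧ W <:+: T}.ncard : ℤ)
        = ({W : List α | W.length = m + 1 ∧ W <:+: T}.ncard : ℤ) + 1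
          + ∑ W ∈ 𝒮 m, (1 - (r W : ℤ)) := by
    intro m hm
    set ℱ : Finset (List α) := L.sublists.toFinset.filter
        (fun W => W.length = m ∧ W <:+: T) with hℱ
    have memF : ∀ W, W ∈ ℱ ↔ W.length = m ∧ W <:+: T := by
      intro W
      simp only [hℱ, Finset.mem_filter, List.mem_toFinset, List.mem_sublists]
      refine ⟨fun h => h.2, fun h => ⟨?_, h⟩⟩
      exact h.2.sublist.trans (List.sublist_append_left T [hash])
    have hcount := kt_count_step T hash hhash m hm
    have hsum_r : ∑ W ∈ ℱ, (r W : ℤ)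
        = ({W : List α | W.length = m + 1 ∧ W <:+: T}.ncard : ℤ) + 1 := by
      have : ∑ W ∈ ℱ, r W = {V : List α | V.length = m + 1 ∧ V <:+: T}.ncard + 1 := by
        rw [← hcount]
        exact Finset.sum_congr rfl (fun W _ => hr W)
      exact_mod_cast congrArg (Nat.cast : ℕ → ℤ) this
    have hcardF : (ℱ.card : ℤ) = ({W : List α | W.length = m ∧ W <:+: T}.ncard : ℤ) := by
      have : (ℱ : Set (List α)) = {W : List α | W.length = m ∧ W <:+: T} := by
        ext W; simpa using memF W
      rw [← Set.ncard_coe_finset, this]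
    have hsub : 𝒮 m ⊆ ℱ := by
      intro W hW
      rw [mem𝒮] at hW
      rw [memF]
      exact ⟨hW.2.2.2, (kt_infix_snoc hW.1).mp hW.2.1⟩
    have hzero : ∀ W ∈ ℱ, W ∉ 𝒮 m → (1 - (r W : ℤ)) = 0 := by
      intro W hWF hWS
      rw [memF] at hWF
      rw [mem𝒮] at hWS
      have hWh : hash ∉ W := fun h => hhash (hWF.2.sublist.subset h)
      have hWL : W <:+: L := (kt_infix_snoc hWh).mpr hWF.2
      have h1 : 1 ≤ r W := by rw [hr]; exact kt_r_pos T hash hWF.2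
      have h2 : ¬ 2 ≤ r W := fun h => hWS ⟨hWh, hWL, h, hWF.1⟩
      have : r W = 1 := by omega
      rw [this]; ring
    have hsum_eq : ∑ W ∈ 𝒮 m, (1 - (r W : ℤ)) = ∑ W ∈ ℱ, (1 - (r W : ℤ)) :=
      Finset.sum_subset hsub (fun W h1 h2 => hzero W h1 h2)
    have hexp : ∑ W ∈ ℱ, (1 - (r W : ℤ)) = (ℱ.card : ℤ) - ∑ W ∈ ℱ, (r W : ℤ) := by
      rw [Finset.sum_sub_distrib]
      simp
    rw [hsum_eq, hexp, hsum_r, ← hcardF]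
    ring
  -- telescoping
  have htel : ∀ j m, m + j = n + 1 →
      ({W : List α | W.length = m ∧ W <:+: T}.ncard : ℤ)
        = ((n : ℤ) + 1 - (m : ℤ)) + ∑ W ∈ 𝒢 m, (1 - (r W : ℤ)) := by
    intro j
    induction j with
    | zero =>
      intro m hm
      have hm' : m = n + 1 := by omega
      subst hm'
      have hempty : {W : List α | W.length = n + 1 ∧ W <:+: T} = ∅ := by
        ext W
        simp only [Set.mem_setOf_eq, Set.mem_empty_iff_false, iff_false, not_and]
        intro hlen hW
        have := hW.sublist.length_le
        omega
      have h𝒢empty : 𝒢 (n + 1) = ∅ := by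
        ext W
        simp only [Finset.notMem_empty, iff_false]
        intro hW
        rw [mem𝒢] at hW
        have hWT : W <:+: T := (kt_infix_snoc hW.1).mp hW.2.1
        have := hWT.sublist.length_le
        omega
      rw [hempty, h𝒢empty]
      simp
    | succ j ih =>
      intro m hm
      have hmn : m ≤ n := by omega
      have hih := ih (m + 1) (by omega)
      have hdisj : Disjoint (𝒮 m) (𝒢 (m + 1)) := by
        rw [Finset.disjoint_left]
        intro W hW1 hW2
        rw [mem𝒮] at hW1
        rw [mem𝒢] at hW2
        omega
      have hunion : 𝒢 m = 𝒮 m ∪ 𝒢 (m + 1) := by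
        ext W
        rw [mem𝒢, Finset.mem_union, mem𝒮, mem𝒢]
        constructor
        · rintro ⟨h1, h2, h3, h4⟩
          rcases eq_or_lt_of_le h4 with h | h
          · exact Or.inl ⟨h1, h2, h3, h.symm⟩
          · exact Or.inr ⟨h1, h2, h3, h⟩
        · rintro (⟨h1, h2, h3, h4⟩ | ⟨h1, h2, h3, h4⟩)
          · exact ⟨h1, h2, h3, by omega⟩
          · exact ⟨h1, h2, h3, by omega⟩
      rw [hstep m hmn, hih, hunion, Finset.sum_union hdisj]
      push_cast
      ring
  -- conclude
  have hset : {W : List α | hash ∉ W ∧ W <:+: L ∧ 2 ≤ r W ∧ k ≤ W.length}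
      = (𝒢 k : Set (List α)) := by
    ext W
    simp only [Set.mem_setOf_eq, Finset.mem_coe, mem𝒢]
  rw [hset, finsum_mem_coe_finset]
  exact htel (n + 1 - k) k (by omega)
end

section
/- Let T ∈ Σ^n, let # ∉ Σ be strictly smaller than every character of Σ, and let T# be T with # appended, so that all n+1 rotations of T# are pairwise distinct. Define LCP[1] = 0 and, for 2 ≤ i ≤ n+1, LCP[i] = the length of the longest common prefix of the rotations of T# of lexicographic ranks i−1 and i. Then the number of distinct nonempty factors of T (the substring complexity C(T)) equals n(n+1)/2 − Σ_{i=1}^{n+1} LCP[i]. -/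
private lemma lex_asymm' {α : Type*} [LinearOrder α] :
    ∀ {a b : List α}, List.Lex (· < ·) a b → List.Lex (· < ·) b a → False := by
  intro a b h
  induction h with
  | nil => intro h2; cases h2
  | cons h ih =>
    intro h2
    cases h2 with
    | cons h3 => exact ih h3
    | rel h3 => exact lt_irrefl _ h3
  | rel h =>
    intro h2
    cases h2 with
    | cons h3 => exact lt_irrefl _ h
    | rel h3 => exact lt_asymm h h3

private lemma lex_take' {α : Type*} [LinearOrder α] (m : ℕ) :
    ∀ {a b : List α}, List.Lex (· < ·) a b →
      List.Lex (· < ·) (a.take m) (b.take m) ∨ a.take m = b.take m := by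
  induction m with
  | zero => intro a b _; right; rfl
  | succ k ih =>
    intro a b h
    cases h with
    | nil => left; exact List.Lex.nil
    | @cons x as bs h =>
      rcases ih h with h' | h'
      · left; simpa using List.Lex.cons (r := (· < ·)) (a := x) h'
      · right; simp [h']
    | rel h => left; exact List.Lex.rel h

/-- substring complexity from the LCP array.  `sa` is the (1-based)
suffix array of `T# = T ++ [#]` (where `#` is strictly smaller than every character
of the alphabet, so all `n+1` rotations of `T#` are pairwise distinct), and `LCP i`
is the length of the longest common prefix of the rotations of `T#` of lexicographic
ranks `i−1` and `i` (with `LCP 1 = 0`).  Then the number of distinct nonempty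
factors of `T` equals `n(n+1)/2 − Σ_{i=1}^{n+1} LCP i`. -/
theorem substring_complexity_eq {α : Type*} [LinearOrder α]
    (T : List α) (n : ℕ) (hn : T.length = n)
    (hash : α) (hhash : ∀ c ∈ T, hash < c)
    (sa : ℕ → ℕ)
    (hsa_range : ∀ i, 1 ≤ i → i ≤ n + 1 → 1 ≤ sa i ∧ sa i ≤ n + 1)
    (hsa_mono : ∀ i j, 1 ≤ i → i < j → j ≤ n + 1 →
      List.Lex (· < ·) ((T ++ [hash]).rotate (sa i - 1)) ((T ++ [hash]).rotate (sa j - 1)))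
    (hsa_surj : ∀ v, 1 ≤ v → v ≤ n + 1 → ∃ i, 1 ≤ i ∧ i ≤ n + 1 ∧ sa i = v)
    (LCP : ℕ → ℕ) (hLCP1 : LCP 1 = 0)
    (hLCP : ∀ i, 2 ≤ i → i ≤ n + 1 →
      IsGreatest {l | ((T ++ [hash]).rotate (sa (i - 1) - 1)).take l
        = ((T ++ [hash]).rotate (sa i - 1)).take l} (LCP i)) :
    {W : List α | W ≠ [] ∧ W <:+: T}.ncard
      = n * (n + 1) / 2 - ∑ i ∈ Finset.Icc 1 (n + 1), LCP i := by
  classical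
  have hhashT : hash ∉ T := fun h => lt_irrefl _ (hhash _ h)
  have hSlen : (T ++ [hash]).length = n + 1 := by simp [hn]
  have rotLen : ∀ p : ℕ, ((T ++ [hash]).rotate (p - 1)).length = n + 1 := by
    intro p; simp [hn]
  have dropLen : ∀ p, 1 ≤ p → p ≤ n + 1 → (T.drop (p - 1)).length = n + 1 - p := by
    intro p h1 h2; rw [List.length_drop, hn]; omega
  have decomp : ∀ p, 1 ≤ p → p ≤ n + 1 →
      (T ++ [hash]).rotate (p - 1) = T.drop (p - 1) ++ ([hash] ++ T.take (p - 1)) := by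
    intro p h1 h2
    rw [List.rotate_eq_drop_append_take (by rw [hSlen]; omega),
      List.drop_append_of_le_length (by rw [hn]; omega),
      List.take_append_of_le_length (by rw [hn]; omega), List.append_assoc]
  have htake1 : ∀ p, 1 ≤ p → p ≤ n + 1 →
      ((T ++ [hash]).rotate (p - 1)).take (n + 1 - p) = T.drop (p - 1) := by
    intro p h1 h2
    rw [decomp p h1 h2, List.take_append_of_le_length (by rw [dropLen p h1 h2]),
      List.take_of_length_le (by rw [dropLen p h1 h2])]
  have htake2 : ∀ p, 1 ≤ p → p ≤ n + 1 →
      ((T ++ [hash]).rotate (p - 1)).take (n + 2 - p) = T.drop (p - 1) ++ [hash] := by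
    intro p h1 h2
    rw [decomp p h1 h2, ← List.append_assoc,
      List.take_append_of_le_length (by simp [dropLen p h1 h2]; omega),
      List.take_of_length_le (by simp [dropLen p h1 h2]; omega)]
  have hmemout : ∀ p, 1 ≤ p → p ≤ n + 1 → ∀ m, m ≤ n + 1 - p →
      hash ∉ ((T ++ [hash]).rotate (p - 1)).take m := by
    intro p h1 h2 m hm hmem
    have h' : ((T ++ [hash]).rotate (p - 1)).take m = (T.drop (p - 1)).take m := by
      rw [← htake1 p h1 h2, List.take_take]
      congr 1
      omega
    rw [h'] at hmem
    exact hhashT (List.drop_subset _ _ (List.take_subset _ _ hmem))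
  have hmemin : ∀ p, 1 ≤ p → p ≤ n + 1 → ∀ m, n + 1 - p < m →
      hash ∈ ((T ++ [hash]).rotate (p - 1)).take m := by
    intro p h1 h2 m hm
    have h1' : hash ∈ ((T ++ [hash]).rotate (p - 1)).take (n + 2 - p) := by
      rw [htake2 p h1 h2]; simp
    exact List.take_subset_take_left _ (by omega) h1'
  -- key uniqueness: two rotations sharing a prefix past the `#` position coincide
  have huniq : ∀ p q m, 1 ≤ p → p ≤ n + 1 → 1 ≤ q → q ≤ n + 1 →
      ((T ++ [hash]).rotate (p - 1)).take m = ((T ++ [hash]).rotate (q - 1)).take m →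
      n + 1 - q < m → p = q := by
    intro p q m hp1 hp2 hq1 hq2 heq hqm
    have hpm : n + 1 - p < m := by
      by_contra h
      push_neg at h
      exact hmemout p hp1 hp2 m h (heq ▸ hmemin q hq1 hq2 m hqm)
    have key : ∀ a b, 1 ≤ a → a ≤ n + 1 → 1 ≤ b → b ≤ n + 1 → b < a →
        ((T ++ [hash]).rotate (a - 1)).take m = ((T ++ [hash]).rotate (b - 1)).take m →
        n + 1 - a < m → False := by
      intro a b ha1 ha2 hb1 hb2 hba heq' ham
      have h1 : ((T ++ [hash]).rotate (a - 1)).take (n + 2 - a) = T.drop (a - 1) ++ [hash] :=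
        htake2 a ha1 ha2
      have h2 : ((T ++ [hash]).rotate (b - 1)).take (n + 2 - a)
          = (T.drop (b - 1)).take (n + 2 - a) := by
        rw [← htake1 b hb1 hb2, List.take_take]
        congr 1
        omega
      have h3 : ((T ++ [hash]).rotate (a - 1)).take (n + 2 - a)
          = ((T ++ [hash]).rotate (b - 1)).take (n + 2 - a) := by
        have hmin : min (n + 2 - a) m = n + 2 - a := by omega
        have := congrArg (List.take (n + 2 - a)) heq'
        rwa [List.take_take, List.take_take, hmin] at this
      have : hash ∈ (T.drop (b - 1)).take (n + 2 - a) := by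
        rw [← h2, ← h3, h1]; simp
      exact hhashT (List.drop_subset _ _ (List.take_subset _ _ this))
    rcases lt_trichotomy p q with h | h | h
    · exact ((key q p hq1 hq2 hp1 hp2 h heq.symm hqm)).elim
    · exact h
    · exact ((key p q hp1 hp2 hq1 hq2 h heq hpm)).elim
  -- bound : LCP i ≤ n + 1 - sa i on the whole range
  have hbound : ∀ i ∈ Finset.Icc 1 (n + 1), LCP i ≤ n + 1 - sa i := by
    intro i hi
    rw [Finset.mem_Icc] at hi
    rcases eq_or_lt_of_le hi.1 with h1 | h1
    · rw [← h1, hLCP1]; omega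
    · by_contra h
      push_neg at h
      have hi2 : 2 ≤ i := h1
      obtain ⟨hq1, hq2⟩ := hsa_range i hi.1 hi.2
      obtain ⟨hp1, hp2⟩ := hsa_range (i - 1) (by omega) (by omega)
      have heq := (hLCP i hi2 hi.2).1
      have := huniq (sa (i - 1)) (sa i) (LCP i) hp1 hp2 hq1 hq2 heq h
      have hlex := hsa_mono (i - 1) i (by omega) (by omega) hi.2
      rw [this] at hlex
      exact (lex_asymm' hlex hlex).elim
  -- the index set
  set D : Finset ((_ : ℕ) × ℕ) :=
    (Finset.Icc 1 (n + 1)).sigma (fun i => Finset.Ioc (LCP i) (n + 1 - sa i)) with hD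
  set g : (Σ _ : ℕ, ℕ) → List α :=
    (fun x => ((T ++ [hash]).rotate (sa x.1 - 1)).take x.2) with hg
  have hmemD : ∀ x : (Σ _ : ℕ, ℕ), x ∈ D ↔
      (1 ≤ x.1 ∧ x.1 ≤ n + 1) ∧ LCP x.1 < x.2 ∧ x.2 ≤ n + 1 - sa x.1 := by
    intro x; simp [hD, Finset.mem_sigma, Finset.mem_Icc, Finset.mem_Ioc, and_assoc]
  -- the "adjacent rank" lemma
  have hadj : ∀ i j ℓ, 1 ≤ i → i < j → j ≤ n + 1 →
      ((T ++ [hash]).rotate (sa i - 1)).take ℓ = ((T ++ [hash]).rotate (sa j - 1)).take ℓ →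
      ((T ++ [hash]).rotate (sa (j - 1) - 1)).take ℓ
        = ((T ++ [hash]).rotate (sa j - 1)).take ℓ := by
    intro i j ℓ hi1 hij hj heq
    rcases eq_or_lt_of_le (show i ≤ j - 1 by omega) with h | h
    · rw [← h]; exact heq
    · have l1 := lex_take' ℓ (hsa_mono i (j - 1) hi1 h (by omega))
      have l2 := lex_take' ℓ (hsa_mono (j - 1) j (by omega) (by omega) hj)
      rcases l1 with l1 | l1
      · rcases l2 with l2 | l2
        · rw [heq] at l1
          exact (lex_asymm' l1 l2).elim
        · exact l2
      · rw [← l1, heq]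
  -- injectivity of g on D
  have hinj : Set.InjOn g ↑D := by
    rintro ⟨i, ℓ⟩ hi ⟨j, m⟩ hj heq
    rw [Finset.mem_coe, hmemD] at hi hj
    dsimp only at hi hj
    obtain ⟨⟨hi1, hi2⟩, hiL, hiU⟩ := hi
    obtain ⟨⟨hj1, hj2⟩, hjL, hjU⟩ := hj
    have hsi := hsa_range i hi1 hi2
    have hsj := hsa_range j hj1 hj2
    have hlm : ℓ = m := by
      have := congrArg List.length heq
      simp only [hg, List.length_take, rotLen] at this
      omega
    subst hlm
    have hmain : ∀ a b, 1 ≤ a → a < b → b ≤ n + 1 →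
        ((T ++ [hash]).rotate (sa a - 1)).take ℓ
          = ((T ++ [hash]).rotate (sa b - 1)).take ℓ → LCP b < ℓ → False := by
      intro a b ha hab hb heq' hL
      have h2 := hadj a b ℓ ha hab hb heq'
      have := (hLCP b (by omega) hb).2 h2
      omega
    rcases lt_trichotomy i j with h | h | h
    · exact (hmain i j hi1 h hj2 heq hjL).elim
    · rw [h]
    · exact (hmain j i hj1 h hi2 heq.symm hiL).elim
  -- the set of factors is the image of D under g
  have hFeq : {W : List α | W ≠ [] ∧ W <:+: T} = g '' ↑D := by
    ext W
    simp only [Set.mem_setOf_eq, Set.mem_image, Finset.mem_coe]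
    constructor
    · rintro ⟨hW0, hWinf⟩
      have hWT : ∀ c ∈ W, c ∈ T := fun c hc => hWinf.subset hc
      obtain ⟨u, v, huv⟩ := hWinf
      have hℓpos : 0 < W.length := List.length_pos_iff.mpr hW0
      have hlen : u.length + (W.length + v.length) = n := by
        have := congrArg List.length huv
        simpa [hn] using this
      have hp1 : 1 ≤ u.length + 1 := by omega
      have hpn : u.length + 1 ≤ n + 1 := by omega
      have hWp : ((T ++ [hash]).rotate (u.length + 1 - 1)).take W.length = W := by
        rw [decomp (u.length + 1) hp1 hpn]
        have h0 : u.length + 1 - 1 = u.length := by omega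
        rw [h0]
        have hdrop : T.drop u.length = W ++ v := by
          rw [← huv, List.append_assoc, List.drop_left]
        rw [hdrop, List.append_assoc, List.take_append_of_le_length le_rfl,
          List.take_length]
      obtain ⟨i₀, hi₀1, hi₀2, hi₀3⟩ := hsa_surj (u.length + 1) hp1 hpn
      have hP : ∃ i, (1 ≤ i ∧ i ≤ n + 1) ∧
          ((T ++ [hash]).rotate (sa i - 1)).take W.length = W :=
        ⟨i₀, ⟨hi₀1, hi₀2⟩, by rw [hi₀3]; exact hWp⟩
      obtain ⟨⟨hi1, hi2⟩, hiW⟩ := Nat.find_spec hP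
      set i := Nat.find hP with hidef
      have hsi := hsa_range i hi1 hi2
      have hU : W.length ≤ n + 1 - sa i := by
        by_contra h
        push_neg at h
        have := hmemin (sa i) hsi.1 hsi.2 W.length h
        rw [hiW] at this
        exact hhashT (hWT _ this)
      have hL : LCP i < W.length := by
        rcases eq_or_lt_of_le hi1 with h1 | h1
        · rw [← h1, hLCP1]; exact hℓpos
        · by_contra h
          push_neg at h
          have hLi := (hLCP i h1 hi2).1
          have heq2 : ((T ++ [hash]).rotate (sa (i - 1) - 1)).take W.length
              = ((T ++ [hash]).rotate (sa i - 1)).take W.length := by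
            have hmin : min W.length (LCP i) = W.length := by omega
            have := congrArg (List.take W.length) hLi
            rwa [List.take_take, List.take_take, hmin] at this
          exact Nat.find_min hP (show i - 1 < i by omega)
            ⟨⟨by omega, by omega⟩, heq2.trans hiW⟩
      exact ⟨⟨i, W.length⟩, (hmemD _).mpr ⟨⟨hi1, hi2⟩, hL, hU⟩, hiW⟩
    · rintro ⟨⟨i, ℓ⟩, hmem, rfl⟩
      rw [hmemD] at hmem
      dsimp only at hmem
      obtain ⟨⟨hi1, hi2⟩, hL, hU⟩ := hmem
      have hsi := hsa_range i hi1 hi2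
      have h1 : g ⟨i, ℓ⟩ = (T.drop (sa i - 1)).take ℓ := by
        show ((T ++ [hash]).rotate (sa i - 1)).take ℓ = _
        rw [← htake1 (sa i) hsi.1 hsi.2, List.take_take]
        congr 1
        omega
      constructor
      · rw [h1]
        apply List.ne_nil_of_length_pos
        rw [List.length_take, List.length_drop, hn]
        omega
      · rw [h1]
        exact (List.take_prefix _ _).isInfix.trans (List.drop_suffix _ _).isInfix
  -- cardinality computations
  have hDcard : D.card = ∑ i ∈ Finset.Icc 1 (n + 1), ((n + 1 - sa i) - LCP i) := by
    rw [hD, Finset.card_sigma]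
    simp [Nat.card_Ioc]
  have hsum1 : ∑ i ∈ Finset.Icc 1 (n + 1), (n + 1 - sa i)
      = ∑ v ∈ Finset.Icc 1 (n + 1), (n + 1 - v) := by
    apply Finset.sum_bij (fun i _ => sa i)
    · intro a ha
      rw [Finset.mem_Icc] at ha ⊢
      exact hsa_range a ha.1 ha.2
    · intro a ha b hb hab
      rw [Finset.mem_Icc] at ha hb
      by_contra hne
      rcases lt_trichotomy a b with h | h | h
      · have := hsa_mono a b ha.1 h hb.2
        rw [hab] at this
        exact lex_asymm' this this
      · exact hne h
      · have := hsa_mono b a hb.1 h ha.2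
        rw [hab] at this
        exact lex_asymm' this this
    · intro b hb
      rw [Finset.mem_Icc] at hb
      obtain ⟨i, h1, h2, h3⟩ := hsa_surj b hb.1 hb.2
      exact ⟨i, Finset.mem_Icc.mpr ⟨h1, h2⟩, h3⟩
    · intro a _; rfl
  have hsum2 : ∑ v ∈ Finset.Icc 1 (n + 1), (n + 1 - v) = n * (n + 1) / 2 := by
    rw [show ∑ v ∈ Finset.Icc 1 (n + 1), (n + 1 - v)
        = ∑ k ∈ Finset.range (n + 1), k from
      Finset.sum_nbij' (fun v => n + 1 - v) (fun k => n + 1 - k)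
        (by intro a ha; rw [Finset.mem_Icc] at ha; rw [Finset.mem_range]; omega)
        (by intro a ha; rw [Finset.mem_range] at ha; rw [Finset.mem_Icc]; omega)
        (by intro a ha; rw [Finset.mem_Icc] at ha; omega)
        (by intro a ha; rw [Finset.mem_range] at ha; omega)
        (by intro a _; rfl)]
    rw [Finset.sum_range_id]
    simp [Nat.mul_comm]
  rw [hFeq, Set.ncard_image_of_injOn hinj, Set.ncard_coe_finset, hDcard]
  rw [Finset.sum_tsub_distrib (Finset.Icc 1 (n + 1)) hbound, hsum1, hsum2]
end
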